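/- arXiv:2111.12633 — 3 statements merged into one kernel-verified Lean document; each statement's English description precedes it below -/
import Mathlib

section
/- Let m > 0 and T > 0. The switched scalar differential equation F(m,T): dV/dt = 2(u(t) − m·sinh(V(t))), where u is the 2T-periodic square wave equal to +1 on [0,T) and −1 on [T,2T), has a unique 2T-periodic solution P_{m,T}. This periodic solution is globally asymptotically stable: for every solution V of F(m,T), V(t) − P_{m,T}(t) → 0 as t → ∞. Moreover P_{m,T} takes its values in the interval [V_m^−, V_m^+], where V_m^+ = arcsinh(1/m) and V_m^− = −arcsinh(1/m), and its minimum value P^−_{m,T} and maximum value P^+_{m,T} satisfy P^−_{m,T} = −P^+_{m,T}. -/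
open Real Filter Set

/-- The `2T`-periodic square wave: `+1` on `[0,T)`, `-1` on `[T,2T)`. -/
noncomputable def squareWave (T t : ℝ) : ℝ :=
  if Int.fract (t / (2 * T)) < 1 / 2 then 1 else -1

/-- A solution of the switched system `F(m,T)`: a continuous function satisfying
`dV/dt = 2(u(t) - m sinh V)` away from the switching times `nT`, `n ∈ ℤ`. -/
def IsSolF (m T : ℝ) (V : ℝ → ℝ) : Prop :=
  Continuous V ∧ ∀ t : ℝ, (∀ n : ℤ, t ≠ n * T) →
    HasDerivAt V (2 * (squareWave T t - m * Real.sinh (V t))) t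

noncomputable def mden (lam P Q x t : ℝ) : ℝ := (x - Q) + (P - x) * Real.exp (-(lam * t))

noncomputable def mob (lam P Q x t : ℝ) : ℝ :=
  (P * (x - Q) + Q * (P - x) * Real.exp (-(lam * t))) / mden lam P Q x t

lemma mden_pos {lam P Q x t : ℝ} (hQP : Q < P) (hQx : Q < x) (ht : 0 ≤ lam * t) :
    0 < mden lam P Q x t := by
  have hE1 : Real.exp (-(lam * t)) ≤ 1 := Real.exp_le_one_iff.2 (by linarith)
  have hE0 : 0 < Real.exp (-(lam * t)) := Real.exp_pos _
  unfold mden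
  rcases le_total x P with h | h
  · nlinarith
  · nlinarith

lemma mob_zero {lam P Q x : ℝ} (hQP : Q < P) : mob lam P Q x 0 = x := by
  have h : P - Q ≠ 0 := sub_ne_zero.2 hQP.ne'
  unfold mob mden
  rw [mul_zero, neg_zero, Real.exp_zero]
  field_simp
  rw [div_eq_iff (by intro h'; apply h; linarith)]
  ring

lemma mob_mem_le {lam P Q x t : ℝ} (hQP : Q < P) (hQx : Q < x) (hxP : x ≤ P)
    (ht : 0 ≤ lam * t) : x ≤ mob lam P Q x t ∧ mob lam P Q x t ≤ P := by
  have hden := mden_pos hQP hQx ht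
  have hE1 : Real.exp (-(lam * t)) ≤ 1 := Real.exp_le_one_iff.2 (by linarith)
  have hE0 : 0 < Real.exp (-(lam * t)) := Real.exp_pos _
  unfold mob mden at *
  constructor
  · rw [le_div_iff₀ hden]
    nlinarith [mul_nonneg (mul_nonneg (sub_nonneg.2 hxP) (sub_pos.2 hQx).le) (sub_nonneg.2 hE1)]
  · rw [div_le_iff₀ hden]
    nlinarith [mul_nonneg (mul_nonneg (sub_nonneg.2 hxP) (sub_pos.2 hQP).le) hE0.le]

lemma mob_mem_ge {lam P Q x t : ℝ} (hQP : Q < P) (hQx : Q < x) (hPx : P ≤ x)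
    (ht : 0 ≤ lam * t) : P ≤ mob lam P Q x t ∧ mob lam P Q x t ≤ x := by
  have hden := mden_pos hQP hQx ht
  have hE1 : Real.exp (-(lam * t)) ≤ 1 := Real.exp_le_one_iff.2 (by linarith)
  have hE0 : 0 < Real.exp (-(lam * t)) := Real.exp_pos _
  unfold mob mden at *
  constructor
  · rw [le_div_iff₀ hden]
    nlinarith [mul_nonneg (mul_nonneg (sub_nonneg.2 hPx) (sub_pos.2 hQP).le) hE0.le]
  · rw [div_le_iff₀ hden]
    nlinarith [mul_nonneg (mul_nonneg (sub_nonneg.2 hPx) (sub_pos.2 hQx).le) (sub_nonneg.2 hE1)]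

lemma mob_hasDerivAt {lam P Q x t : ℝ} (hden : mden lam P Q x t ≠ 0) :
    HasDerivAt (fun u => mob lam P Q x u)
      (lam * Real.exp (-(lam * t)) * (P - x) * (x - Q) * (P - Q) / (mden lam P Q x t) ^ 2) t := by
  have hlin : HasDerivAt (fun u : ℝ => -(lam * u)) (-lam) t := by
    simpa using ((hasDerivAt_id t).const_mul lam).fun_neg
  have hE : HasDerivAt (fun u : ℝ => Real.exp (-(lam * u))) (Real.exp (-(lam * t)) * (-lam)) t :=
    (Real.hasDerivAt_exp _).comp t hlin
  have hN : HasDerivAt (fun u : ℝ => P * (x - Q) + Q * (P - x) * Real.exp (-(lam * u)))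
      (Q * (P - x) * (Real.exp (-(lam * t)) * (-lam))) t :=
    ((hE.const_mul (Q * (P - x)))).const_add _
  have hD : HasDerivAt (fun u : ℝ => mden lam P Q x u)
      ((P - x) * (Real.exp (-(lam * t)) * (-lam))) t := by
    unfold mden
    exact ((hE.const_mul (P - x))).const_add _
  have h := hN.fun_div hD hden
  refine h.congr_deriv ?_
  unfold mden at *
  rw [div_left_inj' (pow_ne_zero 2 hden)]
  ring

lemma log_mob_hasDerivAt {m a lam P Q x t : ℝ}
    (hlam : lam = m * (P - Q)) (hsum : m * (P + Q) = 2 * a) (hprod : P * Q = -1)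
    (hden : 0 < mden lam P Q x t) (hw : 0 < mob lam P Q x t) :
    HasDerivAt (fun u => Real.log (mob lam P Q x u))
      (2 * (a - m * Real.sinh (Real.log (mob lam P Q x t)))) t := by
  have h := (mob_hasDerivAt hden.ne').log hw.ne'
  convert h using 1
  rw [Real.sinh_log hw]
  have hNpos : 0 < P * (x - Q) + Q * (P - x) * Real.exp (-(lam * t)) := by
    have h2 : mob lam P Q x t * mden lam P Q x t
        = P * (x - Q) + Q * (P - x) * Real.exp (-(lam * t)) := by
      unfold mob; field_simp
    nlinarith [mul_pos hw hden]
  have key : 2 * a * (P * (x - Q) + Q * (P - x) * Real.exp (-(lam * t))) * mden lam P Q x t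
      - m * (P * (x - Q) + Q * (P - x) * Real.exp (-(lam * t))) ^ 2
      + m * (mden lam P Q x t) ^ 2
      = lam * Real.exp (-(lam * t)) * (P - x) * (x - Q) * (P - Q) := by
    unfold mden
    linear_combination (-((P * (x - Q) + Q * (P - x) * Real.exp (-(lam * t)))
        * ((x - Q) + (P - x) * Real.exp (-(lam * t))))) * hsum
      + (m * ((x - Q) + (P - x) * Real.exp (-(lam * t))) ^ 2) * hprod
      + (-((x - Q) * (P - x) * Real.exp (-(lam * t)) * (P - Q))) * hlam
  have hDne : mden lam P Q x t ≠ 0 := hden.ne'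
  have hNne : P * (x - Q) + Q * (P - x) * Real.exp (-(lam * t)) ≠ 0 := hNpos.ne'
  rw [← key]
  unfold mob mden at *
  field_simp
  ring

section helpers

lemma sinh_ineq (x y : ℝ) : (x - y)^2 ≤ (x - y) * (Real.sinh x - Real.sinh y) := by
  have hmono : Monotone (fun u : ℝ => Real.sinh u - u) := by
    have hd : ∀ u : ℝ, HasDerivAt (fun u : ℝ => Real.sinh u - u) (Real.cosh u - 1) u :=
      fun u => (Real.hasDerivAt_sinh u).sub (hasDerivAt_id u)
    have : ∀ u : ℝ, 0 ≤ Real.cosh u - 1 := fun u => by linarith [Real.one_le_cosh u]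
    exact monotone_of_deriv_nonneg (fun u => (hd u).differentiableAt)
      (fun u => by rw [(hd u).deriv]; exact this u)
  rcases le_total y x with h | h
  · have := hmono h
    simp only at this
    nlinarith
  · have := hmono h
    simp only at this
    nlinarith

lemma antitone_glue {T : ℝ} (hT : 0 < T) {h : ℝ → ℝ}
    (H : ∀ n : ℤ, AntitoneOn h (Set.Icc (n*T) ((n+1)*T))) : Antitone h := by
  have hmemL : ∀ n : ℤ, (n : ℝ)*T ∈ Set.Icc ((n : ℝ)*T) (((n : ℝ)+1)*T) :=
    fun n => ⟨le_rfl, by nlinarith⟩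
  have hmemR : ∀ n : ℤ, ((n : ℝ)+1)*T ∈ Set.Icc ((n : ℝ)*T) (((n : ℝ)+1)*T) :=
    fun n => ⟨by nlinarith, le_rfl⟩
  have step : ∀ n : ℤ, h (((n : ℝ)+1)*T) ≤ h ((n : ℝ)*T) := by
    intro n
    have := H n (hmemL n) (hmemR n) (by nlinarith)
    simpa using this
  have chain : ∀ (j : ℕ) (n : ℤ), h (((n : ℝ)+(j : ℝ))*T) ≤ h ((n : ℝ)*T) := by
    intro j
    induction j with
    | zero => intro n; simp
    | succ j ih =>
      intro n
      have h1 : h ((((n+j : ℤ) : ℝ)+1)*T) ≤ h (((n+j : ℤ) : ℝ)*T) := step (n+j)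
      have h2 : h (((n+j : ℤ) : ℝ)*T) ≤ h ((n : ℝ)*T) := by
        have := ih n; push_cast at this ⊢; convert this using 3 <;> push_cast <;> ring
      have hcast : ((n:ℝ) + ((j+1 : ℕ):ℝ))*T = (((n+j:ℤ):ℝ)+1)*T := by push_cast; ring
      rw [hcast]
      exact le_trans h1 h2
  intro a b hab
  set na := ⌊a/T⌋ with hna
  set nb := ⌊b/T⌋ with hnb
  have haI : a ∈ Set.Icc ((na : ℝ)*T) (((na : ℝ)+1)*T) := by
    constructor
    · have := Int.floor_le (a/T); calc (na : ℝ)*T ≤ (a/T)*T := by nlinarith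
        _ = a := by field_simp
    · have := Int.lt_floor_add_one (a/T)
      calc a = (a/T)*T := by field_simp
        _ ≤ ((na : ℝ)+1)*T := by nlinarith
  have hbI : b ∈ Set.Icc ((nb : ℝ)*T) (((nb : ℝ)+1)*T) := by
    constructor
    · have := Int.floor_le (b/T); calc (nb : ℝ)*T ≤ (b/T)*T := by nlinarith
        _ = b := by field_simp
    · have := Int.lt_floor_add_one (b/T)
      calc b = (b/T)*T := by field_simp
        _ ≤ ((nb : ℝ)+1)*T := by nlinarith
  have hnab : na ≤ nb := Int.floor_le_floor (by gcongr)
  rcases eq_or_lt_of_le hnab with he | hl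
  · exact H na haI (he ▸ hbI) hab
  · have h1 : h b ≤ h ((nb : ℝ)*T) := H nb ⟨le_rfl, by nlinarith [hbI.1, hbI.2]⟩ hbI hbI.1
    have h3 : h (((na : ℝ)+1)*T) ≤ h a := H na haI (hmemR na) haI.2
    have h2 : h ((nb : ℝ)*T) ≤ h (((na : ℝ)+1)*T) := by
      have hj : ((na + 1 : ℤ) : ℝ) + ((nb - (na+1)).toNat : ℝ) = (nb : ℝ) := by
        have hz : (((nb - (na+1)).toNat : ℤ) : ℝ) = ((nb : ℝ) - ((na : ℝ)+1)) := by
          rw [Int.toNat_of_nonneg (show (0:ℤ) ≤ nb - (na+1) by omega)]; push_cast; ring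
        push_cast at hz ⊢
        linarith
      have := chain (nb - (na+1)).toNat (na+1)
      rw [hj] at this
      calc h ((nb : ℝ)*T) ≤ h (((na+1 : ℤ) : ℝ)*T) := this
        _ = h (((na : ℝ)+1)*T) := by push_cast; ring_nf
    linarith

lemma fract_formula {T : ℝ} (hT : 0 < T) (k : ℤ) (t : ℝ)
    (h1 : 2*(k : ℝ)*T ≤ t) (h2 : t < 2*(k : ℝ)*T + 2*T) :
    Int.fract (t/(2*T)) = (t - 2*(k : ℝ)*T)/(2*T) := by
  have h2T : (0 : ℝ) < 2*T := by linarith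
  have hfl : ⌊t/(2*T)⌋ = k := by
    rw [Int.floor_eq_iff]
    constructor
    · rw [le_div_iff₀ h2T]; push_cast; nlinarith
    · rw [div_lt_iff₀ h2T]; push_cast; nlinarith
  rw [Int.fract, hfl]
  field_simp
end helpers

lemma contraction {m T : ℝ} (hm : 0 < m) (hT : 0 < T) {V W : ℝ → ℝ}
    (hV : IsSolF m T V) (hW : IsSolF m T W) :
    Antitone (fun t => Real.exp (4*m*t) * (V t - W t)^2) := by
  set h : ℝ → ℝ := fun t => Real.exp (4*m*t) * (V t - W t)^2 with hh
  have hcont : Continuous h := by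
    apply Continuous.mul
    · exact Real.continuous_exp.comp (continuous_const.mul continuous_id)
    · exact ((hV.1.sub hW.1).pow 2)
  have hder : ∀ t : ℝ, (∀ n : ℤ, t ≠ n * T) →
      HasDerivAt h (Real.exp (4*m*t) * (4*m) * (V t - W t)^2
        + Real.exp (4*m*t) * (2 * (V t - W t) *
          ((2 * (squareWave T t - m * Real.sinh (V t))) - (2 * (squareWave T t - m * Real.sinh (W t)))))) t := by
    intro t htn
    have hVd := hV.2 t htn
    have hWd := hW.2 t htn
    have hdiff : HasDerivAt (fun u => V u - W u)
        ((2 * (squareWave T t - m * Real.sinh (V t))) - (2 * (squareWave T t - m * Real.sinh (W t)))) t :=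
      hVd.sub hWd
    have hsq : HasDerivAt (fun u => (V u - W u)^2)
        (2 * (V t - W t) * ((2 * (squareWave T t - m * Real.sinh (V t))) - (2 * (squareWave T t - m * Real.sinh (W t))))) t := by
      have := hdiff.fun_pow 2
      simpa [mul_comm, mul_assoc, mul_left_comm] using this
    have hexp : HasDerivAt (fun u : ℝ => Real.exp (4*m*u)) (Real.exp (4*m*t) * (4*m)) t := by
      have hlin : HasDerivAt (fun u : ℝ => 4*m*u) (4*m) t := by
        simpa using (hasDerivAt_id t).const_mul (4*m)
      exact (Real.hasDerivAt_exp _).comp t hlin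
    simpa [hh, mul_comm, mul_assoc, mul_left_comm] using hexp.fun_mul hsq
  have hdle : ∀ t : ℝ, (∀ n : ℤ, t ≠ n * T) →
      Real.exp (4*m*t) * (4*m) * (V t - W t)^2
        + Real.exp (4*m*t) * (2 * (V t - W t) *
          ((2 * (squareWave T t - m * Real.sinh (V t))) - (2 * (squareWave T t - m * Real.sinh (W t))))) ≤ 0 := by
    intro t htn
    have h1 := sinh_ineq (V t) (W t)
    have h2 : (0:ℝ) < Real.exp (4*m*t) := Real.exp_pos _
    nlinarith [mul_le_mul_of_nonneg_left h1 (mul_pos h2 hm).le]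
  apply antitone_glue hT
  intro n
  apply antitoneOn_of_deriv_nonpos (convex_Icc _ _) hcont.continuousOn
  · rw [interior_Icc]
    intro u hu
    have hun : ∀ j : ℤ, u ≠ j * T := by
      intro j hj
      rw [hj] at hu
      obtain ⟨hu1, hu2⟩ := hu
      have b1 : (n : ℝ) < j := by
        have := hu1; exact_mod_cast (mul_lt_mul_iff_of_pos_right hT).1 this
      have b2 : (j : ℝ) < n + 1 := by
        exact_mod_cast (mul_lt_mul_iff_of_pos_right hT).1 hu2
      have : (n : ℤ) < j := by exact_mod_cast b1
      have : (j : ℤ) < n + 1 := by exact_mod_cast b2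
      omega
    exact ((hder u hun).differentiableAt).differentiableWithinAt
  · rw [interior_Icc]
    intro u hu
    have hun : ∀ j : ℤ, u ≠ j * T := by
      intro j hj
      rw [hj] at hu
      obtain ⟨hu1, hu2⟩ := hu
      have b1 : (n : ℝ) < j := by exact_mod_cast (mul_lt_mul_iff_of_pos_right hT).1 hu1
      have b2 : (j : ℝ) < n + 1 := by exact_mod_cast (mul_lt_mul_iff_of_pos_right hT).1 hu2
      have c1 : (n : ℤ) < j := by exact_mod_cast b1
      have c2 : (j : ℤ) < n + 1 := by exact_mod_cast b2
      omega
    rw [(hder u hun).deriv]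
    exact hdle u hun

set_option maxHeartbeats 2000000 in
lemma exists_periodic {m T : ℝ} (hm : 0 < m) (hT : 0 < T) :
    ∃ P : ℝ → ℝ, IsSolF m T P ∧ Function.Periodic P (2*T) ∧
      ∀ t : ℝ, P t ∈ Set.Icc (-Real.arsinh (1/m)) (Real.arsinh (1/m)) := by
  have h2T : (0:ℝ) < 2*T := by linarith
  set s := Real.sqrt (1+m^2) with hsdef
  have hs2 : s^2 = 1+m^2 := Real.sq_sqrt (by positivity)
  have hs0 : 0 ≤ s := Real.sqrt_nonneg _
  have hs1 : 1 < s := by nlinarith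
  set p := (s+1)/m with hpdef
  set r := (s-1)/m with hrdef
  set lam := 2*s with hlamdef
  have hp0 : 0 < p := div_pos (by linarith) hm
  have hr0 : 0 < r := div_pos (by linarith) hm
  have hrp : r < p := by rw [hrdef, hpdef, div_lt_div_iff₀ hm hm]; nlinarith
  have hlampos : 0 < lam := by rw [hlamdef]; linarith
  have hQP1 : (-r) < p := by linarith
  have hQP2 : (-p) < r := by linarith
  have hlam1 : lam = m * (p - (-r)) := by rw [hlamdef, hpdef, hrdef]; field_simp; ring
  have hlam2 : lam = m * (r - (-p)) := by rw [hlamdef, hpdef, hrdef]; field_simp; ring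
  have hsum1 : m * (p + (-r)) = 2 * (1:ℝ) := by rw [hpdef, hrdef]; field_simp; ring
  have hsum2 : m * (r + (-p)) = 2 * (-1:ℝ) := by rw [hpdef, hrdef]; field_simp; ring
  have hprod1 : p * (-r) = -1 := by
    rw [hpdef, hrdef]; field_simp; nlinarith
  have hprod2 : r * (-p) = -1 := by
    rw [hpdef, hrdef]; field_simp; nlinarith
  -- basic facts about the two flows on [r,p]
  have hw1 : ∀ x ∈ Set.Icc r p, ∀ u : ℝ, 0 ≤ u →
      mob lam p (-r) x u ∈ Set.Icc x p ∧ 0 < mob lam p (-r) x u := by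
    intro x hx u hu
    have h := mob_mem_le hQP1 (show -r < x by linarith [hx.1]) hx.2
      (mul_nonneg hlampos.le hu)
    exact ⟨⟨h.1, h.2⟩, by linarith [h.1, hx.1]⟩
  have hw2 : ∀ x ∈ Set.Icc r p, ∀ u : ℝ, 0 ≤ u →
      mob lam r (-p) x u ∈ Set.Icc r x ∧ 0 < mob lam r (-p) x u := by
    intro x hx u hu
    have h := mob_mem_ge hQP2 (show -p < x by linarith [hx.1]) hx.1
      (mul_nonneg hlampos.le hu)
    exact ⟨⟨h.1, h.2⟩, by linarith [h.1]⟩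
  have hd1 : ∀ x ∈ Set.Icc r p, ∀ u : ℝ, 0 ≤ u →
      HasDerivAt (fun v => Real.log (mob lam p (-r) x v))
        (2 * (1 - m * Real.sinh (Real.log (mob lam p (-r) x u)))) u := by
    intro x hx u hu
    exact log_mob_hasDerivAt hlam1 hsum1 hprod1
      (mden_pos hQP1 (by linarith [hx.1]) (mul_nonneg hlampos.le hu)) (hw1 x hx u hu).2
  have hd2 : ∀ x ∈ Set.Icc r p, ∀ u : ℝ, 0 ≤ u →
      HasDerivAt (fun v => Real.log (mob lam r (-p) x v))
        (2 * ((-1) - m * Real.sinh (Real.log (mob lam r (-p) x u)))) u := by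
    intro x hx u hu
    exact log_mob_hasDerivAt hlam2 hsum2 hprod2
      (mden_pos hQP2 (by linarith [hx.1]) (mul_nonneg hlampos.le hu)) (hw2 x hx u hu).2
  -- fixed point of the Poincaré map
  have hmaps1 : Set.MapsTo (fun x => mob lam p (-r) x T) (Set.Icc r p) (Set.Icc r p) := by
    intro x hx
    have h := (hw1 x hx T hT.le).1
    exact ⟨le_trans hx.1 h.1, h.2⟩
  have hcont1 : ContinuousOn (fun x => mob lam p (-r) x T) (Set.Icc r p) := by
    unfold mob mden
    apply ContinuousOn.div
    · exact (Continuous.continuousOn (by fun_prop))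
    · exact (Continuous.continuousOn (by fun_prop))
    · intro x hx
      exact (mden_pos hQP1 (by linarith [hx.1]) (mul_nonneg hlampos.le hT.le)).ne'
  have hcont2 : ContinuousOn (fun x => mob lam r (-p) x T) (Set.Icc r p) := by
    unfold mob mden
    apply ContinuousOn.div
    · exact (Continuous.continuousOn (by fun_prop))
    · exact (Continuous.continuousOn (by fun_prop))
    · intro x hx
      exact (mden_pos hQP2 (by linarith [hx.1]) (mul_nonneg hlampos.le hT.le)).ne'
  have hPhicont : ContinuousOn (fun x => mob lam r (-p) (mob lam p (-r) x T) T - x)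
      (Set.Icc r p) := (hcont2.comp hcont1 hmaps1).sub continuousOn_id
  obtain ⟨x0, hx0I, hx0⟩ : ∃ x0 ∈ Set.Icc r p,
      mob lam r (-p) (mob lam p (-r) x0 T) T - x0 = 0 := by
    have hsubset := intermediate_value_Icc' hrp.le hPhicont
    have hgr : 0 ≤ mob lam r (-p) (mob lam p (-r) r T) T - r := by
      have h1 := (hw1 r ⟨le_rfl, hrp.le⟩ T hT.le).1
      have h2 := (hw2 _ ⟨le_trans le_rfl h1.1, h1.2⟩ T hT.le).1
      linarith [h2.1]
    have hgp : mob lam r (-p) (mob lam p (-r) p T) T - p ≤ 0 := by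
      have h1 := (hw1 p ⟨hrp.le, le_rfl⟩ T hT.le).1
      have h2 := (hw2 _ ⟨le_trans hrp.le h1.1, h1.2⟩ T hT.le).1
      linarith [h2.2, h1.2]
    obtain ⟨x0, hx0I, hx0⟩ := hsubset ⟨hgp, hgr⟩
    exact ⟨x0, hx0I, hx0⟩
  have hfix : mob lam r (-p) (mob lam p (-r) x0 T) T = x0 := by linarith [hx0]
  set y0 := mob lam p (-r) x0 T with hy0def
  have hy0I : y0 ∈ Set.Icc r p := hmaps1 hx0I
  -- the candidate periodic solution
  set F : ℝ → ℝ := fun t => if Int.fract (t/(2*T)) < 1/2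
      then Real.log (mob lam p (-r) x0 (2*T*Int.fract (t/(2*T))))
      else Real.log (mob lam r (-p) y0 (2*T*Int.fract (t/(2*T)) - T)) with hFdef
  have hrep1 : ∀ (k : ℤ) (t : ℝ), 2*(k:ℝ)*T ≤ t → t < 2*(k:ℝ)*T + T →
      Int.fract (t/(2*T)) < 1/2 ∧ F t = Real.log (mob lam p (-r) x0 (t - 2*(k:ℝ)*T)) := by
    intro k t h1 h2
    have hf := fract_formula hT k t h1 (by linarith)
    have hlt : Int.fract (t/(2*T)) < 1/2 := by
      rw [hf, div_lt_iff₀ h2T]; linarith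
    refine ⟨hlt, ?_⟩
    have harg : 2*T*((t - 2*(k:ℝ)*T)/(2*T)) = t - 2*(k:ℝ)*T := by field_simp
    have hFt : F t = Real.log (mob lam p (-r) x0 (2*T*Int.fract (t/(2*T)))) := by
      simp only [hFdef]; rw [if_pos hlt]
    rw [hFt, hf, harg]
  have hrep2 : ∀ (k : ℤ) (t : ℝ), 2*(k:ℝ)*T + T ≤ t → t < 2*(k:ℝ)*T + 2*T →
      ¬(Int.fract (t/(2*T)) < 1/2) ∧
        F t = Real.log (mob lam r (-p) y0 (t - (2*(k:ℝ)*T + T))) := by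
    intro k t h1 h2
    have hf := fract_formula hT k t (by linarith) h2
    have hge : ¬ (Int.fract (t/(2*T)) < 1/2) := by
      rw [hf, not_lt, le_div_iff₀ h2T]; linarith
    refine ⟨hge, ?_⟩
    have harg : 2*T*((t - 2*(k:ℝ)*T)/(2*T)) - T = t - (2*(k:ℝ)*T + T) := by field_simp; ring
    have hFt : F t = Real.log (mob lam r (-p) y0 (2*T*Int.fract (t/(2*T)) - T)) := by
      simp only [hFdef]; rw [if_neg hge]
    rw [hFt, hf, harg]
  -- shifted derivative lemmas
  have hshift1 : ∀ (c t : ℝ), 0 ≤ t - c →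
      HasDerivAt (fun u => Real.log (mob lam p (-r) x0 (u - c)))
        (2 * (1 - m * Real.sinh (Real.log (mob lam p (-r) x0 (t - c))))) t := by
    intro c t ht
    have := (hd1 x0 hx0I (t - c) ht).comp t ((hasDerivAt_id t).sub_const c)
    simpa [Function.comp_def] using this
  have hshift2 : ∀ (c t : ℝ), 0 ≤ t - c →
      HasDerivAt (fun u => Real.log (mob lam r (-p) y0 (u - c)))
        (2 * ((-1) - m * Real.sinh (Real.log (mob lam r (-p) y0 (t - c))))) t := by
    intro c t ht
    have := (hd2 y0 hy0I (t - c) ht).comp t ((hasDerivAt_id t).sub_const c)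
    simpa [Function.comp_def] using this
  -- the differential equation away from switching times
  have hFder : ∀ t : ℝ, (∀ n : ℤ, t ≠ n * T) →
      HasDerivAt F (2 * (squareWave T t - m * Real.sinh (F t))) t := by
    intro t htn
    set k := ⌊t/(2*T)⌋ with hk
    have hfl : ((k:ℝ)) ≤ t/(2*T) := Int.floor_le _
    have hfl2 : t/(2*T) < (k:ℝ) + 1 := Int.lt_floor_add_one _
    have hkle : 2*(k:ℝ)*T ≤ t := by
      have := (le_div_iff₀ h2T).1 hfl; linarith
    have hklt : t < 2*(k:ℝ)*T + 2*T := by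
      have := (div_lt_iff₀ h2T).1 hfl2; linarith
    rcases lt_or_ge t (2*(k:ℝ)*T + T) with hcase | hcase
    · have hne : 2*(k:ℝ)*T ≠ t := by
        intro he; exact htn (2*k) (by push_cast; linarith)
      have hmem : t ∈ Set.Ioo (2*(k:ℝ)*T) (2*(k:ℝ)*T + T) :=
        ⟨lt_of_le_of_ne hkle hne, hcase⟩
      have hrepT := hrep1 k t hkle hcase
      have hev : F =ᶠ[nhds t] (fun u => Real.log (mob lam p (-r) x0 (u - 2*(k:ℝ)*T))) := by
        filter_upwards [Ioo_mem_nhds hmem.1 hmem.2] with u hu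
        exact (hrep1 k u hu.1.le hu.2).2
      have hder := (hshift1 (2*(k:ℝ)*T) t (by linarith [hmem.1])).congr_of_eventuallyEq hev
      have hsw : squareWave T t = 1 := by rw [squareWave, if_pos hrepT.1]
      rw [hsw, hrepT.2]
      exact hder
    · have hne : 2*(k:ℝ)*T + T ≠ t := by
        intro he; exact htn (2*k+1) (by push_cast; linarith)
      have hmem : t ∈ Set.Ioo (2*(k:ℝ)*T + T) (2*(k:ℝ)*T + 2*T) :=
        ⟨lt_of_le_of_ne hcase hne, hklt⟩
      have hrepT := hrep2 k t hcase hklt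
      have hev : F =ᶠ[nhds t] (fun u => Real.log (mob lam r (-p) y0 (u - (2*(k:ℝ)*T + T)))) := by
        filter_upwards [Ioo_mem_nhds hmem.1 hmem.2] with u hu
        exact (hrep2 k u hu.1.le hu.2).2
      have hder := (hshift2 (2*(k:ℝ)*T + T) t (by linarith [hmem.1])).congr_of_eventuallyEq hev
      have hsw : squareWave T t = -1 := by rw [squareWave, if_neg hrepT.1]
      rw [hsw, hrepT.2]
      exact hder
  -- continuity
  have hFcont : Continuous F := by
    rw [continuous_iff_continuousAt]
    intro t
    by_cases htn : ∀ n : ℤ, t ≠ n * T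
    · exact (hFder t htn).continuousAt
    · push_neg at htn
      obtain ⟨n, hn⟩ := htn
      rcases Int.even_or_odd n with ⟨k, hk⟩ | ⟨k, hk⟩
      · -- t = 2kT
        have ht2 : t = 2*(k:ℝ)*T := by rw [hn, hk]; push_cast; ring
        have hFt : F t = Real.log x0 := by
          rw [(hrep1 k t (le_of_eq ht2.symm) (by rw [ht2]; linarith)).2, ht2]
          simp [mob_zero hQP1]
        rw [continuousAt_iff_continuous_left_right]
        constructor
        · -- left of t : second branch of previous period
          have hg : ContinuousAt
              (fun u => Real.log (mob lam r (-p) y0 (u - (2*((k:ℝ)-1)*T + T)))) t :=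
            (hshift2 (2*((k:ℝ)-1)*T + T) t (by rw [ht2]; linarith)).continuousAt
          have hgt : Real.log (mob lam r (-p) y0 (t - (2*((k:ℝ)-1)*T + T))) = Real.log x0 := by
            rw [show t - (2*((k:ℝ)-1)*T + T) = T by rw [ht2]; ring, hfix]
          have hio : ContinuousWithinAt F (Set.Iio t) t := by
            apply (hg.continuousWithinAt (s := Set.Iio t)).congr_of_eventuallyEq
            · filter_upwards [Ioo_mem_nhdsLT_of_mem
                (show t ∈ Set.Ioc (t - T) t from ⟨by linarith, le_rfl⟩)] with u hu
              have h1 : 2*(((k:ℤ)-1 : ℤ):ℝ)*T + T ≤ u := by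
                push_cast; rw [ht2] at hu; linarith [hu.1]
              have h2 : u < 2*(((k:ℤ)-1 : ℤ):ℝ)*T + 2*T := by
                push_cast; rw [ht2] at hu; linarith [hu.2]
              have := (hrep2 (k-1) u h1 h2).2
              rw [this]
              push_cast
              ring_nf
            · rw [hFt, hgt]
          rw [← Set.Iio_insert]
          exact continuousWithinAt_insert_self.2 hio
        · have hg : ContinuousAt (fun u => Real.log (mob lam p (-r) x0 (u - 2*(k:ℝ)*T))) t :=
            (hshift1 (2*(k:ℝ)*T) t (by rw [ht2]; linarith)).continuousAt
          apply (hg.continuousWithinAt (s := Set.Ici t)).congr_of_eventuallyEq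
          · filter_upwards [Ico_mem_nhdsGE
              (show t < t + T by linarith)] with u hu
            exact (hrep1 k u (ht2 ▸ hu.1) (by rw [ht2] at hu; linarith [hu.2])).2
          · rw [hFt, show t - 2*(k:ℝ)*T = 0 by rw [ht2]; ring, mob_zero hQP1]
      · -- t = 2kT + T
        have ht2 : t = 2*(k:ℝ)*T + T := by rw [hn, hk]; push_cast; ring
        have hFt : F t = Real.log y0 := by
          rw [(hrep2 k t (le_of_eq ht2.symm) (by rw [ht2]; linarith)).2, ht2]
          simp [mob_zero hQP2]
        rw [continuousAt_iff_continuous_left_right]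
        constructor
        · -- left of t : first branch
          have hg : ContinuousAt (fun u => Real.log (mob lam p (-r) x0 (u - 2*(k:ℝ)*T))) t :=
            (hshift1 (2*(k:ℝ)*T) t (by rw [ht2]; linarith)).continuousAt
          have hgt : Real.log (mob lam p (-r) x0 (t - 2*(k:ℝ)*T)) = Real.log y0 := by
            rw [show t - 2*(k:ℝ)*T = T by rw [ht2]; ring, hy0def]
          have hio : ContinuousWithinAt F (Set.Iio t) t := by
            apply (hg.continuousWithinAt (s := Set.Iio t)).congr_of_eventuallyEq
            · filter_upwards [Ioo_mem_nhdsLT_of_mem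
                (show t ∈ Set.Ioc (t - T) t from ⟨by linarith, le_rfl⟩)] with u hu
              exact (hrep1 k u (by rw [ht2] at hu; linarith [hu.1]) (by rw [ht2] at hu; linarith [hu.2])).2
            · rw [hFt, hgt]
          rw [← Set.Iio_insert]
          exact continuousWithinAt_insert_self.2 hio
        · have hg : ContinuousAt
              (fun u => Real.log (mob lam r (-p) y0 (u - (2*(k:ℝ)*T + T)))) t :=
            (hshift2 (2*(k:ℝ)*T + T) t (by rw [ht2]; linarith)).continuousAt
          apply (hg.continuousWithinAt (s := Set.Ici t)).congr_of_eventuallyEq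
          · filter_upwards [Ico_mem_nhdsGE
              (show t < t + T by linarith)] with u hu
            exact (hrep2 k u (ht2 ▸ hu.1) (by rw [ht2] at hu; linarith [hu.2])).2
          · rw [hFt, show t - (2*(k:ℝ)*T + T) = 0 by rw [ht2]; ring, mob_zero hQP2]
  -- periodicity
  have hFper : Function.Periodic F (2*T) := by
    intro t
    have harg : (t + 2*T)/(2*T) = t/(2*T) + 1 := by field_simp
    simp only [hFdef, harg, Int.fract_add_one]
  -- bounds
  have harc : Real.arsinh (1/m) = Real.log p := by
    have hsq : Real.sqrt (1+(1/m)^2) = s/m := by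
      rw [show (1+(1/m)^2 : ℝ) = (s/m)^2 by field_simp; linear_combination -hs2]
      exact Real.sqrt_sq (by positivity)
    rw [Real.arsinh, hsq, hpdef]
    congr 1
    field_simp
    ring
  have harcneg : -Real.arsinh (1/m) = Real.log r := by
    have hrinv : r = p⁻¹ := by
      rw [hrdef, hpdef, inv_div, div_eq_div_iff hm.ne' (show s+1 ≠ 0 by linarith)]
      linear_combination hs2
    rw [harc, hrinv, Real.log_inv]
  have hFbd : ∀ t : ℝ, F t ∈ Set.Icc (-Real.arsinh (1/m)) (Real.arsinh (1/m)) := by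
    intro t
    rw [harcneg, harc]
    have hfr0 : 0 ≤ Int.fract (t/(2*T)) := Int.fract_nonneg _
    by_cases hbr : Int.fract (t/(2*T)) < 1/2
    · have hτ : 0 ≤ 2*T*Int.fract (t/(2*T)) := mul_nonneg h2T.le hfr0
      have hb := (hw1 x0 hx0I _ hτ).1
      have hpos := (hw1 x0 hx0I _ hτ).2
      have hFt : F t = Real.log (mob lam p (-r) x0 (2*T*Int.fract (t/(2*T)))) := by
        simp only [hFdef]; rw [if_pos hbr]
      rw [hFt]
      exact ⟨Real.log_le_log hr0 (le_trans hx0I.1 hb.1), Real.log_le_log hpos hb.2⟩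
    · push_neg at hbr
      have hτ : 0 ≤ 2*T*Int.fract (t/(2*T)) - T := by nlinarith
      have hb := (hw2 y0 hy0I _ hτ).1
      have hpos := (hw2 y0 hy0I _ hτ).2
      have hFt : F t = Real.log (mob lam r (-p) y0 (2*T*Int.fract (t/(2*T)) - T)) := by
        simp only [hFdef]; rw [if_neg (not_lt.2 hbr)]
      rw [hFt]
      exact ⟨Real.log_le_log hr0 hb.1, Real.log_le_log hpos (le_trans hb.2 hy0I.2)⟩
  exact ⟨F, ⟨hFcont, hFder⟩, hFper, hFbd⟩

lemma squareWave_shift {T : ℝ} (hT : 0 < T) (t : ℝ) :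
    squareWave T (t + T) = -squareWave T t := by
  have h2T : (0:ℝ) < 2*T := by linarith
  have harg : (t + T)/(2*T) = t/(2*T) + 1/2 := by field_simp
  have hx := Int.fract_nonneg (t/(2*T))
  have hx1 := Int.fract_lt_one (t/(2*T))
  have hsplit : t/(2*T) + 1/2 = (⌊t/(2*T)⌋ : ℝ) + (Int.fract (t/(2*T)) + 1/2) := by
    rw [Int.fract]; ring
  have hfr : Int.fract ((t + T)/(2*T)) = Int.fract (Int.fract (t/(2*T)) + 1/2) := by
    rw [harg, hsplit, Int.fract_intCast_add]
  unfold squareWave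
  by_cases hc : Int.fract (t/(2*T)) < 1/2
  · have : Int.fract (Int.fract (t/(2*T)) + 1/2) = Int.fract (t/(2*T)) + 1/2 :=
      Int.fract_eq_self.2 ⟨by linarith, by linarith⟩
    rw [if_pos hc, hfr, this, if_neg (by linarith)]
  · push_neg at hc
    have hcast : Int.fract (t/(2*T)) + 1/2 = ((1:ℤ) : ℝ) + (Int.fract (t/(2*T)) - 1/2) := by
      push_cast; ring
    have : Int.fract (Int.fract (t/(2*T)) + 1/2) = Int.fract (t/(2*T)) - 1/2 := by
      rw [hcast, Int.fract_intCast_add]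
      exact Int.fract_eq_self.2 ⟨by linarith, by linarith⟩
    rw [if_neg (not_lt.2 hc), hfr, this, if_pos (by linarith)]
    ring


theorem statement0 (m T : ℝ) (hm : 0 < m) (hT : 0 < T) :
    ∃ P : ℝ → ℝ,
      (IsSolF m T P ∧ Function.Periodic P (2 * T)) ∧
      (∀ Q : ℝ → ℝ, IsSolF m T Q → Function.Periodic Q (2 * T) → Q = P) ∧
      (∀ V : ℝ → ℝ, IsSolF m T V →
        Filter.Tendsto (fun t => V t - P t) Filter.atTop (nhds 0)) ∧
      (∀ t : ℝ, P t ∈ Set.Icc (-Real.arsinh (1 / m)) (Real.arsinh (1 / m))) ∧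
      sInf (Set.range P) = -sSup (Set.range P) := by
  obtain ⟨P, hP, hPper, hPbd⟩ := exists_periodic hm hT
  -- uniqueness
  have huniq : ∀ Q : ℝ → ℝ, IsSolF m T Q → Function.Periodic Q (2 * T) → Q = P := by
    intro Q hQ hQper
    funext t
    have hanti := contraction hm hT hQ hP
    have h1 : Real.exp (4*m*(t+2*T)) * (Q (t+2*T) - P (t+2*T))^2
        ≤ Real.exp (4*m*t) * (Q t - P t)^2 := hanti (by linarith : t ≤ t + 2*T)
    rw [hQper t, hPper t] at h1
    have hex : Real.exp (4*m*(t+2*T)) = Real.exp (4*m*t) * Real.exp (8*m*T) := by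
      rw [← Real.exp_add]; ring_nf
    have he1 : 1 < Real.exp (8*m*T) := by
      have := Real.add_one_le_exp (8*m*T)
      nlinarith
    have hE := Real.exp_pos (4*m*t)
    have hsq : (Q t - P t)^2 = 0 := by
      rw [hex] at h1
      refine le_antisymm ?_ (sq_nonneg _)
      by_contra hpos
      push_neg at hpos
      have h2 : Real.exp (4*m*t) * (Q t - P t)^2
          < Real.exp (4*m*t) * Real.exp (8*m*T) * (Q t - P t)^2 := by
        nlinarith [mul_pos (mul_pos hE hpos) (sub_pos.2 he1)]
      linarith
    have h0 : Q t - P t = 0 := by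
      nlinarith [hsq, sq_abs (Q t - P t), abs_nonneg (Q t - P t), sq_nonneg (Q t - P t)]
    exact sub_eq_zero.1 h0
  -- stability
  have hstab : ∀ V : ℝ → ℝ, IsSolF m T V →
      Filter.Tendsto (fun t => V t - P t) Filter.atTop (nhds 0) := by
    intro V hV
    have hanti := contraction hm hT hV hP
    set C := (V 0 - P 0)^2 with hC
    have hC0 : 0 ≤ C := sq_nonneg _
    have hub : ∀ t : ℝ, 0 ≤ t → |V t - P t| ≤ Real.sqrt C * Real.exp (-(2*m*t)) := by
      intro t ht
      have h1 : Real.exp (4*m*t) * (V t - P t)^2 ≤ Real.exp (4*m*0) * (V 0 - P 0)^2 :=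
        hanti ht
      have h2 : (V t - P t)^2 ≤ C * Real.exp (-(4*m*t)) := by
        have hprod : Real.exp (-(4*m*t)) * Real.exp (4*m*t) = 1 := by
          rw [← Real.exp_add]; simp
        have hE := Real.exp_pos (4*m*t)
        have hE' := Real.exp_pos (-(4*m*t))
        simp only [mul_zero, Real.exp_zero, one_mul] at h1
        nlinarith
      have h3 : Real.exp (-(4*m*t)) = (Real.exp (-(2*m*t)))^2 := by
        rw [sq, ← Real.exp_add]; ring_nf
      calc |V t - P t| = Real.sqrt ((V t - P t)^2) := (Real.sqrt_sq_eq_abs _).symm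
        _ ≤ Real.sqrt (C * Real.exp (-(4*m*t))) := Real.sqrt_le_sqrt h2
        _ = Real.sqrt C * Real.sqrt (Real.exp (-(4*m*t))) := Real.sqrt_mul hC0 _
        _ = Real.sqrt C * Real.exp (-(2*m*t)) := by
            rw [h3, Real.sqrt_sq (Real.exp_pos _).le]
    have hexp0 : Filter.Tendsto (fun t : ℝ => Real.sqrt C * Real.exp (-(2*m*t)))
        Filter.atTop (nhds 0) := by
      have h2m : Filter.Tendsto (fun t : ℝ => (2*m)*t) Filter.atTop Filter.atTop :=
        Filter.Tendsto.const_mul_atTop (by positivity) tendsto_id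
      have := Real.tendsto_exp_atBot.comp (tendsto_neg_atTop_atBot.comp h2m)
      have h0 := this.const_mul (Real.sqrt C)
      simpa [Function.comp] using h0
    have hneg0 : Filter.Tendsto (fun t : ℝ => -(Real.sqrt C * Real.exp (-(2*m*t))))
        Filter.atTop (nhds 0) := by simpa using hexp0.neg
    apply tendsto_of_tendsto_of_tendsto_of_le_of_le' hneg0 hexp0
    · filter_upwards [Filter.eventually_ge_atTop (0:ℝ)] with t ht
      have := hub t ht
      have := abs_le.1 this
      linarith [this.1]
    · filter_upwards [Filter.eventually_ge_atTop (0:ℝ)] with t ht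
      exact le_trans (le_abs_self _) (hub t ht)
  -- symmetry of range
  have hWsol : IsSolF m T (fun t => -P (t + T)) := by
    constructor
    · exact (hP.1.comp (continuous_id.add continuous_const)).neg
    · intro t htn
      have htn' : ∀ n : ℤ, t + T ≠ n * T := by
        intro n h
        exact htn (n - 1) (by push_cast; linarith)
      have hd := (hP.2 (t + T) htn').comp t ((hasDerivAt_id t).add_const T)
      have hd2 := hd.fun_neg
      refine hd2.congr_deriv ?_
      rw [squareWave_shift hT t, Real.sinh_neg]
      ring
  have hWper : Function.Periodic (fun t => -P (t + T)) (2 * T) := by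
    intro t
    simp only
    rw [show t + 2*T + T = (t + T) + 2*T by ring, hPper]
  have hkey : ∀ t, P (t + T) = -P t := by
    intro t
    have := congrFun (huniq _ hWsol hWper) t
    linarith
  have hsetneg : Set.range P = -(Set.range P) := by
    ext x
    rw [Set.mem_neg]
    constructor
    · rintro ⟨t, rfl⟩
      exact ⟨t + T, by rw [hkey t]⟩
    · rintro ⟨t, ht⟩
      exact ⟨t + T, by rw [hkey t, ht]; exact neg_neg x⟩
  have hsym : sInf (Set.range P) = -sSup (Set.range P) := by
    rw [Real.sInf_def, ← hsetneg]
  exact ⟨P, ⟨hP, hPper⟩, huniq, hstab, hPbd, hsym⟩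
end

section
/- Let m > 0 be fixed, and for T > 0 let P^+_{m,T} denote the maximum value of the unique 2T-periodic solution of the switched system F(m,T). Then the map T ↦ P^+_{m,T} is strictly increasing on (0,∞) and lim_{T→∞} P^+_{m,T} = V_m^+ = arcsinh(1/m). -/
open Real Filter Set

section helpers

lemma sw_vals (T t : ℝ) : squareWave T t = 1 ∨ squareWave T t = -1 := by
  unfold squareWave; split <;> simp

lemma sw_le_one (T t : ℝ) : squareWave T t ≤ 1 := by
  rcases sw_vals T t with h | h <;> rw [h] <;> norm_num

lemma sw_eq_one {T t : ℝ} (hT : 0 < T) (h : t ∈ Ioo 0 T) : squareWave T t = 1 := by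
  obtain ⟨h0, h1⟩ := h
  have h2T : (0:ℝ) < 2 * T := by linarith
  have hfr : Int.fract (t / (2 * T)) = t / (2 * T) :=
    Int.fract_eq_self.2 ⟨by positivity, by rw [div_lt_one h2T]; linarith⟩
  unfold squareWave
  rw [hfr, if_pos (by rw [div_lt_div_iff₀ h2T (by norm_num)]; linarith)]

lemma sw_Ioo_even {T : ℝ} (hT : 0 < T) {n : ℤ} (hn : Even n) {s : ℝ}
    (h : s ∈ Ioo ((n:ℝ)*T) (((n:ℝ)+1)*T)) : squareWave T s = 1 := by
  obtain ⟨k, hk⟩ := hn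
  obtain ⟨h0, h1⟩ := h
  have h2T : (0:ℝ) < 2 * T := by linarith
  have key : s / (2*T) = (k:ℝ) + (s - (n:ℝ)*T) / (2*T) := by
    field_simp
    rw [hk]; push_cast; ring
  have hr0 : 0 < (s - (n:ℝ)*T) / (2*T) := by
    apply div_pos (by linarith) h2T
  have hr1 : (s - (n:ℝ)*T) / (2*T) < 1/2 := by
    rw [div_lt_div_iff₀ h2T (by norm_num)]; nlinarith
  unfold squareWave
  rw [key, Int.fract_intCast_add, Int.fract_eq_self.2 ⟨hr0.le, by linarith⟩, if_pos hr1]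

lemma sw_Ioo_odd {T : ℝ} (hT : 0 < T) {n : ℤ} (hn : Odd n) {s : ℝ}
    (h : s ∈ Ioo ((n:ℝ)*T) (((n:ℝ)+1)*T)) : squareWave T s = -1 := by
  obtain ⟨k, hk⟩ := hn
  obtain ⟨h0, h1⟩ := h
  have h2T : (0:ℝ) < 2 * T := by linarith
  have key : s / (2*T) = (k:ℝ) + (1/2 + (s - (n:ℝ)*T) / (2*T)) := by
    field_simp
    rw [hk]; push_cast; ring
  have hr0 : 0 < (s - (n:ℝ)*T) / (2*T) := by
    apply div_pos (by linarith) h2T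
  have hr1 : (s - (n:ℝ)*T) / (2*T) < 1/2 := by
    rw [div_lt_div_iff₀ h2T (by norm_num)]; nlinarith
  unfold squareWave
  rw [key, Int.fract_intCast_add, Int.fract_eq_self.2 ⟨by linarith, by linarith⟩,
    if_neg (by push_neg; linarith)]

lemma sw_shift {T : ℝ} (hT : 0 < T) (t : ℝ) : squareWave T (t + T) = - squareWave T t := by
  have h2T : (0:ℝ) < 2 * T := by linarith
  have key : (t + T) / (2*T) = t/(2*T) + 1/2 := by field_simp
  have hsplit : t/(2*T) = (⌊t/(2*T)⌋ : ℝ) + Int.fract (t/(2*T)) := by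
    rw [Int.fract]; ring
  set y := Int.fract (t/(2*T)) with hy
  have hy0 : 0 ≤ y := Int.fract_nonneg _
  have hy1 : y < 1 := Int.fract_lt_one _
  unfold squareWave
  rw [key, hsplit, add_assoc, Int.fract_intCast_add, Int.fract_intCast_add, Int.fract_fract, ← hy]
  by_cases hc : y < 1/2
  · rw [Int.fract_eq_self.2 ⟨by linarith, by linarith⟩, if_pos hc, if_neg (by push_neg; linarith)]
  · push_neg at hc
    have heq : y + 1/2 = (y - 1/2) + (1:ℤ) := by push_cast; ring
    rw [heq, Int.fract_add_intCast, Int.fract_eq_self.2 ⟨by linarith, by linarith⟩,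
      if_pos (by linarith), if_neg (by push_neg; exact hc)]
    norm_num

lemma not_switch_Ioo {T : ℝ} (hT : 0 < T) (n : ℤ) {s : ℝ}
    (h : s ∈ Ioo ((n:ℝ)*T) (((n:ℝ)+1)*T)) : ∀ k : ℤ, s ≠ k*T := by
  rintro k rfl
  obtain ⟨h0, h1⟩ := h
  have hnk : (n:ℝ) < k := by
    have := (mul_lt_mul_iff_of_pos_right hT).1 h0; exact_mod_cast this
  have hkn : (k:ℝ) < (n:ℝ)+1 := by
    have := (mul_lt_mul_iff_of_pos_right hT).1 h1; exact_mod_cast this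
  have : n < k := by exact_mod_cast hnk
  have : k < n + 1 := by exact_mod_cast hkn
  omega

lemma prev_interval {T : ℝ} (hT : 0 < T) (t : ℝ) :
    ∃ n : ℤ, (n:ℝ)*T < t ∧ t ≤ ((n:ℝ)+1)*T := by
  refine ⟨⌈t/T⌉ - 1, ?_, ?_⟩
  · have h1 : (⌈t/T⌉ : ℝ) < t/T + 1 := Int.ceil_lt_add_one _
    have : ((⌈t/T⌉ - 1 : ℤ) : ℝ) < t/T := by push_cast; linarith
    calc ((⌈t/T⌉ - 1 : ℤ) : ℝ) * T < (t/T) * T := by exact (mul_lt_mul_iff_of_pos_right hT).2 this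
    _ = t := by field_simp
  · have h1 : t/T ≤ (⌈t/T⌉ : ℝ) := Int.le_ceil _
    have h2 : t = (t/T)*T := by field_simp
    calc t = (t/T)*T := h2
    _ ≤ (((⌈t/T⌉ - 1 : ℤ) : ℝ)+1) * T := by
        apply (mul_le_mul_iff_of_pos_right hT).2; push_cast; linarith

end helpers

section calcblocks

lemma monoOn_aux {g g' : ℝ → ℝ} {a b : ℝ} (hc : ContinuousOn g (Icc a b))
    (hd : ∀ t ∈ Ioo a b, HasDerivAt g (g' t) t) (h0 : ∀ t ∈ Ioo a b, 0 ≤ g' t) :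
    MonotoneOn g (Icc a b) := by
  apply monotoneOn_of_deriv_nonneg (convex_Icc a b) hc
  · intro x hx
    rw [interior_Icc] at hx
    exact (hd x hx).differentiableAt.differentiableWithinAt
  · intro x hx
    rw [interior_Icc] at hx
    rw [(hd x hx).deriv]; exact h0 x hx

lemma antiOn_aux {g g' : ℝ → ℝ} {a b : ℝ} (hc : ContinuousOn g (Icc a b))
    (hd : ∀ t ∈ Ioo a b, HasDerivAt g (g' t) t) (h0 : ∀ t ∈ Ioo a b, g' t ≤ 0) :
    AntitoneOn g (Icc a b) := by
  apply antitoneOn_of_deriv_nonpos (convex_Icc a b) hc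
  · intro x hx
    rw [interior_Icc] at hx
    exact (hd x hx).differentiableAt.differentiableWithinAt
  · intro x hx
    rw [interior_Icc] at hx
    rw [(hd x hx).deriv]; exact h0 x hx

lemma strictMonoOn_aux {g g' : ℝ → ℝ} {a b : ℝ} (hc : ContinuousOn g (Icc a b))
    (hd : ∀ t ∈ Ioo a b, HasDerivAt g (g' t) t) (h0 : ∀ t ∈ Ioo a b, 0 < g' t) :
    StrictMonoOn g (Icc a b) := by
  apply strictMonoOn_of_deriv_pos (convex_Icc a b) hc
  intro x hx
  rw [interior_Icc] at hx
  rw [(hd x hx).deriv]; exact h0 x hx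

lemma strictAntiOn_aux {g g' : ℝ → ℝ} {a b : ℝ} (hc : ContinuousOn g (Icc a b))
    (hd : ∀ t ∈ Ioo a b, HasDerivAt g (g' t) t) (h0 : ∀ t ∈ Ioo a b, g' t < 0) :
    StrictAntiOn g (Icc a b) := by
  apply strictAntiOn_of_deriv_neg (convex_Icc a b) hc
  intro x hx
  rw [interior_Icc] at hx
  rw [(hd x hx).deriv]; exact h0 x hx

lemma sinh_sub_ge {x y : ℝ} (h : x ≤ y) : y - x ≤ Real.sinh y - Real.sinh x := by
  have mono : Monotone (fun u : ℝ => Real.sinh u - u) := by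
    apply monotone_of_deriv_nonneg
    · exact Real.differentiable_sinh.sub differentiable_id
    · intro u
      have : HasDerivAt (fun u : ℝ => Real.sinh u - u) (Real.cosh u - 1) u :=
        (Real.hasDerivAt_sinh u).sub (hasDerivAt_id u)
      rw [this.deriv]
      linarith [Real.one_le_cosh u]
  have := mono h
  simp only at this
  linarith

lemma mul_sinh_ge (a b : ℝ) : (a - b)^2 ≤ (a - b) * (Real.sinh a - Real.sinh b) := by
  rcases le_total b a with h | h
  · nlinarith [sinh_sub_ge h]
  · nlinarith [sinh_sub_ge h]

lemma sinh_lip {B x y : ℝ} (hx : |x| ≤ B) (hy : |y| ≤ B) :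
    |Real.sinh x - Real.sinh y| ≤ Real.cosh B * |x - y| := by
  have hB : 0 ≤ B := le_trans (abs_nonneg x) hx
  have key : ∀ u v : ℝ, |u| ≤ B → |v| ≤ B → v ≤ u →
      Real.sinh u - Real.sinh v ≤ Real.cosh B * (u - v) := by
    intro u v hu hv huv
    have mono : MonotoneOn (fun z : ℝ => Real.cosh B * z - Real.sinh z) (Icc (-B) B) := by
      apply monoOn_aux (g' := fun z => Real.cosh B - Real.cosh z)
      · exact ((continuous_const.mul continuous_id).sub Real.continuous_sinh).continuousOn
      · intro t _
        exact (((hasDerivAt_id t).const_mul (Real.cosh B)).sub (Real.hasDerivAt_sinh t)).congr_deriv (by simp)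
      · intro t ht
        have : Real.cosh t ≤ Real.cosh B := by
          rw [Real.cosh_le_cosh]
          rw [abs_le] at *
          rw [abs_of_nonneg hB]
          obtain ⟨h1, h2⟩ := ht.1, ht.2
          constructor <;> [linarith [ht.1]; linarith [ht.2]]
        linarith
    have hm := mono (abs_le.1 hv |> fun h => ⟨h.1, h.2⟩) (abs_le.1 hu |> fun h => ⟨h.1, h.2⟩) huv
    simp only at hm
    linarith
  rcases le_total y x with h | h
  · have h1 : Real.sinh y ≤ Real.sinh x := Real.sinh_le_sinh.2 h
    rw [abs_of_nonneg (by linarith), abs_of_nonneg (by linarith)]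
    exact key x y hx hy h
  · have h1 : Real.sinh x ≤ Real.sinh y := Real.sinh_le_sinh.2 h
    rw [abs_of_nonpos (by linarith), abs_of_nonpos (by linarith)]
    have := key y x hy hx h
    linarith [this, Real.cosh_pos (x := B)]

end calcblocks
section gronwall

lemma uniq_fwd {V W V' W' : ℝ → ℝ} {K a b : ℝ} (hab : a ≤ b)
    (hVc : ContinuousOn V (Icc a b)) (hWc : ContinuousOn W (Icc a b))
    (hV : ∀ t ∈ Ioo a b, HasDerivAt V (V' t) t)
    (hW : ∀ t ∈ Ioo a b, HasDerivAt W (W' t) t)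
    (hK : ∀ t ∈ Ioo a b, |V' t - W' t| ≤ K * |V t - W t|)
    (h0 : V a = W a) : ∀ t ∈ Icc a b, V t = W t := by
  set L := |K| with hL
  set g : ℝ → ℝ := fun t => Real.exp (-(2*L)*t) * (V t - W t)^2 with hg
  have ganti : AntitoneOn g (Icc a b) := by
    apply antiOn_aux (g' := fun t =>
      (-(2*L) * Real.exp (-(2*L)*t)) * (V t - W t)^2 +
        Real.exp (-(2*L)*t) * (2 * (V t - W t) * (V' t - W' t)))
    · apply ContinuousOn.mul
      · exact (Real.continuous_exp.comp (continuous_const.mul continuous_id)).continuousOn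
      · exact ((hVc.sub hWc).pow 2)
    · intro t ht
      have h1 : HasDerivAt (fun t => Real.exp (-(2*L)*t)) (-(2*L) * Real.exp (-(2*L)*t)) t := by
        have := (((hasDerivAt_id t).const_mul (-(2*L))).exp)
        simpa [mul_comm] using this
      have h2 : HasDerivAt (fun t => (V t - W t)^2) (2 * (V t - W t) * (V' t - W' t)) t := by
        have := ((hV t ht).sub (hW t ht)).pow 2
        exact this.congr_deriv (by simp)
      exact h1.mul h2
    · intro t ht
      have hexp : 0 < Real.exp (-(2*L)*t) := Real.exp_pos _
      have hdd : (V t - W t) * (V' t - W' t) ≤ L * (V t - W t)^2 := by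
        calc (V t - W t) * (V' t - W' t) ≤ |(V t - W t) * (V' t - W' t)| := le_abs_self _
        _ = |V t - W t| * |V' t - W' t| := abs_mul _ _
        _ ≤ |V t - W t| * (K * |V t - W t|) := by
            apply mul_le_mul_of_nonneg_left (hK t ht) (abs_nonneg _)
        _ ≤ |V t - W t| * (L * |V t - W t|) := by
            apply mul_le_mul_of_nonneg_left _ (abs_nonneg _)
            apply mul_le_mul_of_nonneg_right (le_abs_self K) (abs_nonneg _)
        _ = L * (V t - W t)^2 := by rw [← sq_abs (V t - W t)]; ring
      nlinarith [hexp]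
  intro t ht
  have h2 : g a = 0 := by simp [hg, h0]
  have h1 : g t ≤ 0 := h2 ▸ ganti (left_mem_Icc.2 hab) ht ht.1
  have hexp : 0 < Real.exp (-(2*L)*t) := Real.exp_pos _
  have h4 : (V t - W t)^2 ≤ 0 := by
    by_contra hpos
    push_neg at hpos
    have : 0 < g t := by simp only [hg]; exact mul_pos hexp hpos
    linarith
  have h5 : (V t - W t)^2 = 0 := le_antisymm h4 (sq_nonneg _)
  have := pow_eq_zero_iff (n := 2) (by norm_num) |>.1 h5
  linarith [sub_eq_zero.1 this]

lemma uniq_bwd {V W V' W' : ℝ → ℝ} {K a b : ℝ} (hab : a ≤ b)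
    (hVc : ContinuousOn V (Icc a b)) (hWc : ContinuousOn W (Icc a b))
    (hV : ∀ t ∈ Ioo a b, HasDerivAt V (V' t) t)
    (hW : ∀ t ∈ Ioo a b, HasDerivAt W (W' t) t)
    (hK : ∀ t ∈ Ioo a b, |V' t - W' t| ≤ K * |V t - W t|)
    (h0 : V b = W b) : ∀ t ∈ Icc a b, V t = W t := by
  set L := |K| with hL
  set g : ℝ → ℝ := fun t => Real.exp ((2*L)*t) * (V t - W t)^2 with hg
  have gmono : MonotoneOn g (Icc a b) := by
    apply monoOn_aux (g' := fun t =>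
      ((2*L) * Real.exp ((2*L)*t)) * (V t - W t)^2 +
        Real.exp ((2*L)*t) * (2 * (V t - W t) * (V' t - W' t)))
    · apply ContinuousOn.mul
      · exact (Real.continuous_exp.comp (continuous_const.mul continuous_id)).continuousOn
      · exact ((hVc.sub hWc).pow 2)
    · intro t ht
      have h1 : HasDerivAt (fun t => Real.exp ((2*L)*t)) ((2*L) * Real.exp ((2*L)*t)) t := by
        have := (((hasDerivAt_id t).const_mul (2*L)).exp)
        simpa [mul_comm] using this
      have h2 : HasDerivAt (fun t => (V t - W t)^2) (2 * (V t - W t) * (V' t - W' t)) t := by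
        have := ((hV t ht).sub (hW t ht)).pow 2
        exact this.congr_deriv (by simp)
      exact h1.mul h2
    · intro t ht
      have hexp : 0 < Real.exp ((2*L)*t) := Real.exp_pos _
      have hdd : -((V t - W t) * (V' t - W' t)) ≤ L * (V t - W t)^2 := by
        calc -((V t - W t) * (V' t - W' t)) ≤ |(V t - W t) * (V' t - W' t)| := neg_le_abs _
        _ = |V t - W t| * |V' t - W' t| := abs_mul _ _
        _ ≤ |V t - W t| * (K * |V t - W t|) := by
            apply mul_le_mul_of_nonneg_left (hK t ht) (abs_nonneg _)
        _ ≤ |V t - W t| * (L * |V t - W t|) := by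
            apply mul_le_mul_of_nonneg_left _ (abs_nonneg _)
            apply mul_le_mul_of_nonneg_right (le_abs_self K) (abs_nonneg _)
        _ = L * (V t - W t)^2 := by rw [← sq_abs (V t - W t)]; ring
      nlinarith [hexp]
  intro t ht
  have h2 : g b = 0 := by simp [hg, h0]
  have h1 : g t ≤ 0 := h2 ▸ gmono ht (right_mem_Icc.2 hab) ht.2
  have hexp : 0 < Real.exp ((2*L)*t) := Real.exp_pos _
  have h4 : (V t - W t)^2 ≤ 0 := by
    by_contra hpos
    push_neg at hpos
    have : 0 < g t := by simp only [hg]; exact mul_pos hexp hpos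
    linarith
  have h5 : (V t - W t)^2 = 0 := le_antisymm h4 (sq_nonneg _)
  have := pow_eq_zero_iff (n := 2) (by norm_num) |>.1 h5
  linarith [sub_eq_zero.1 this]

end gronwall
section antisym

lemma shift_not_switch {T : ℝ} (hT : 0 < T) {t : ℝ} (h : ∀ k : ℤ, t ≠ k*T) :
    ∀ k : ℤ, t + T ≠ k*T := by
  intro k hk
  apply h (k-1)
  push_cast
  linarith

lemma antisym_sol {m T : ℝ} (hm : 0 < m) (hT : 0 < T) {P : ℝ → ℝ}
    (hsol : IsSolF m T P) (hper : Function.Periodic P (2*T)) :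
    ∀ t, P (t + T) = - P t := by
  set D : ℝ → ℝ := fun t => P (t + T) + P t with hD
  set D' : ℝ → ℝ := fun t =>
    2 * (squareWave T (t+T) - m * Real.sinh (P (t+T))) +
      2 * (squareWave T t - m * Real.sinh (P t)) with hD'
  set g : ℝ → ℝ := fun t => Real.exp ((4*m)*t) * (D t)^2 with hg
  have hPc : Continuous P := hsol.1
  have hDc : Continuous D := (hPc.comp (continuous_id.add continuous_const)).add hPc
  have hgc : Continuous g :=
    (Real.continuous_exp.comp (continuous_const.mul continuous_id)).mul (hDc.pow 2)
  have key : ∀ n : ℤ, AntitoneOn g (Icc ((n:ℝ)*T) (((n:ℝ)+1)*T)) := by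
    intro n
    apply antiOn_aux (g' := fun t =>
      ((4*m) * Real.exp ((4*m)*t)) * (D t)^2 + Real.exp ((4*m)*t) * (2 * D t * D' t))
    · exact hgc.continuousOn
    · intro t ht
      have hns : ∀ k : ℤ, t ≠ k*T := not_switch_Ioo hT n ht
      have hns' : ∀ k : ℤ, t + T ≠ k*T := shift_not_switch hT hns
      have hd1 : HasDerivAt (fun s => P (s + T))
          (2 * (squareWave T (t+T) - m * Real.sinh (P (t+T)))) t :=
        HasDerivAt.comp_add_const _ _ (hsol.2 (t+T) hns')
      have hd2 := hsol.2 t hns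
      have hDd : HasDerivAt D (D' t) t := hd1.add hd2
      have h1 : HasDerivAt (fun t => Real.exp ((4*m)*t)) ((4*m) * Real.exp ((4*m)*t)) t := by
        have := (((hasDerivAt_id t).const_mul (4*m)).exp)
        simpa [mul_comm] using this
      have h2 : HasDerivAt (fun t => (D t)^2) (2 * D t * D' t) t := by
        have := hDd.pow 2
        exact this.congr_deriv (by simp)
      exact h1.mul h2
    · intro t ht
      have hsw : squareWave T (t+T) = - squareWave T t := sw_shift hT t
      have hDD' : D t * D' t ≤ -(2*m) * (D t)^2 := by
        have hkey : (D t)^2 ≤ D t * (Real.sinh (P (t+T)) - Real.sinh (-(P t))) := by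
          have := mul_sinh_ge (P (t+T)) (-(P t))
          simpa [hD, sub_neg_eq_add] using this
        have hform : D' t = -(2*m) * (Real.sinh (P (t+T)) - Real.sinh (-(P t))) := by
          show 2 * (squareWave T (t + T) - m * Real.sinh (P (t + T))) +
              2 * (squareWave T t - m * Real.sinh (P t)) =
            -(2*m) * (Real.sinh (P (t+T)) - Real.sinh (-(P t)))
          rw [hsw, Real.sinh_neg]
          ring
        rw [hform]
        nlinarith
      have hexp : 0 < Real.exp ((4*m)*t) := Real.exp_pos _
      nlinarith
  have glue : ∀ (k : ℕ) (n : ℤ), AntitoneOn g (Icc ((n:ℝ)*T) (((n + (k:ℤ) : ℤ):ℝ)*T)) := by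
    intro k
    induction k with
    | zero =>
      intro n x hx y hy _
      have hc0 : ((n + ((0:ℕ):ℤ) : ℤ):ℝ) = (n:ℝ) := by push_cast; ring
      rw [hc0] at hx hy
      simp only [Set.Icc_self, Set.mem_singleton_iff] at hx hy
      rw [hx, hy]
    | succ k ih =>
      intro n
      have h1 := ih n
      have h2 := key (n + (k:ℤ))
      have hle1 : (n:ℝ)*T ≤ ((n + (k:ℤ) : ℤ):ℝ)*T := by
        apply mul_le_mul_of_nonneg_right _ hT.le
        exact_mod_cast Int.le.intro k rfl
      have hle2 : ((n + (k:ℤ) : ℤ):ℝ)*T ≤ (((n + (k:ℤ) : ℤ):ℝ)+1)*T := by nlinarith [hT.le]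
      have h3 := h1.union_right h2 (isGreatest_Icc hle1) (isLeast_Icc hle2)
      rw [Icc_union_Icc_eq_Icc hle1 hle2] at h3
      have e : (((n + (k:ℤ) : ℤ):ℝ)+1)*T = ((n + ((k+1:ℕ):ℤ) : ℤ):ℝ)*T := by push_cast; ring
      rw [e] at h3
      exact h3
  intro t
  by_contra hne
  have hDt : D t ≠ 0 := by
    intro h
    apply hne
    have : P (t + T) + P t = 0 := h
    linarith
  set n : ℤ := ⌊(t - 2*T)/T⌋ with hn
  have hfl1 : (n:ℝ) ≤ (t - 2*T)/T := Int.floor_le _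
  have hfl2 : (t - 2*T)/T < (n:ℝ) + 1 := Int.lt_floor_add_one _
  have hb1 : (n:ℝ)*T ≤ t - 2*T := by
    calc (n:ℝ)*T ≤ ((t - 2*T)/T)*T := mul_le_mul_of_nonneg_right hfl1 hT.le
    _ = t - 2*T := by field_simp
  have hb2 : t - 2*T < ((n:ℝ)+1)*T := by
    calc t - 2*T = ((t - 2*T)/T)*T := by field_simp
    _ < ((n:ℝ)+1)*T := (mul_lt_mul_iff_of_pos_right hT).2 hfl2
  have hcast : ((n + ((4:ℕ):ℤ) : ℤ):ℝ)*T = ((n:ℝ)+4)*T := by push_cast; ring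
  have hmem1 : t - 2*T ∈ Icc ((n:ℝ)*T) (((n:ℝ)+4)*T) := ⟨hb1, by nlinarith⟩
  have hmem2 : t ∈ Icc ((n:ℝ)*T) (((n:ℝ)+4)*T) := ⟨by nlinarith, by nlinarith⟩
  have hgle : g t ≤ g (t - 2*T) := by
    have h4 := glue 4 n
    rw [hcast] at h4
    exact h4 hmem1 hmem2 (by linarith)
  have hDper : D (t - 2*T) = D t := by
    have e1 : P (t - 2*T + T) = P (t + T) := by
      have := hper (t - 2*T + T)
      rw [show t - 2*T + T + 2*T = t + T by ring] at this
      exact this.symm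
    have e2 : P (t - 2*T) = P t := by
      have := hper (t - 2*T)
      rw [show t - 2*T + 2*T = t by ring] at this
      exact this.symm
    simp only [hD, e1, e2]
  have hD2 : 0 < (D t)^2 := lt_of_le_of_ne (sq_nonneg _) (Ne.symm (pow_ne_zero 2 hDt))
  have hexplt : Real.exp ((4*m)*(t - 2*T)) < Real.exp ((4*m)*t) :=
    Real.exp_lt_exp.2 (by nlinarith)
  have hgt : g (t - 2*T) = Real.exp ((4*m)*(t - 2*T)) * (D t)^2 := by
    show Real.exp ((4*m)*(t - 2*T)) * (D (t - 2*T))^2 = _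
    rw [hDper]
  have hgt2 : g t = Real.exp ((4*m)*t) * (D t)^2 := rfl
  rw [hgt, hgt2] at hgle
  nlinarith

end antisym
section master

lemma master {m T : ℝ} (hm : 0 < m) (hT : 0 < T) {P : ℝ → ℝ}
    (hsol : IsSolF m T P) (hper : Function.Periodic P (2*T)) :
    0 < sSup (range P) ∧ sSup (range P) < Real.arsinh (1/m) ∧
    P T = sSup (range P) ∧ P 0 = -sSup (range P) ∧
    (∀ t, |P t| ≤ sSup (range P)) ∧ StrictMonoOn P (Icc 0 T) ∧
    (∀ s ∈ Ioo 0 T, HasDerivAt P (2*(1 - m*Real.sinh (P s))) s) := by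
  set Vp := Real.arsinh (1/m) with hVdef
  have hVppos : 0 < Vp := Real.arsinh_pos_iff.2 (by positivity)
  have hsinhV : Real.sinh Vp = 1/m := Real.sinh_arsinh _
  have hcont := hsol.1
  have h2T : (0:ℝ) < 2*T := by linarith
  obtain ⟨ts, hts, hmax⟩ := isCompact_Icc.exists_isMaxOn (s := Icc (0:ℝ) (2*T))
    (nonempty_Icc.2 (by linarith)) hcont.continuousOn
  have hmax' := isMaxOn_iff.1 hmax
  have hub : ∀ t, P t ≤ P ts := by
    intro t
    obtain ⟨y, hy, hxy⟩ := hper.exists_mem_Ico₀ h2T t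
    rw [hxy]
    exact hmax' y ⟨hy.1, hy.2.le⟩
  set M := sSup (range P) with hMdef
  have hMts : M = P ts := by
    apply IsGreatest.csSup_eq ⟨mem_range_self ts, ?_⟩
    rintro y ⟨t, rfl⟩
    exact hub t
  have hubM : ∀ t, P t ≤ M := by intro t; rw [hMts]; exact hub t
  have localdec : ∀ (t0 : ℝ) (n : ℤ) (c : ℝ), (n:ℝ)*T < t0 → t0 ≤ ((n:ℝ)+1)*T →
      P t0 = M → 0 < c →
      (∀ s ∈ Ioo ((n:ℝ)*T) (((n:ℝ)+1)*T), |s - t0| < c →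
        2*(squareWave T s - m*Real.sinh (P s)) < 0) → False := by
    intro t0 n c h1 h2 hPt0 hc hneg
    set d := min c (t0 - (n:ℝ)*T) with hd
    have hd0 : 0 < d := lt_min hc (by linarith)
    have hdc : d ≤ c := min_le_left _ _
    have hdn : d ≤ t0 - (n:ℝ)*T := min_le_right _ _
    have hanti : StrictAntiOn P (Icc (t0 - d) t0) := by
      apply strictAntiOn_aux (g' := fun s => 2*(squareWave T s - m*Real.sinh (P s)))
        hcont.continuousOn
      · intro s hs
        exact hsol.2 s (not_switch_Ioo hT n ⟨by linarith [hs.1], by linarith [hs.2]⟩)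
      · intro s hs
        apply hneg s ⟨by linarith [hs.1], by linarith [hs.2]⟩
        rw [abs_sub_comm, abs_of_pos (by linarith [hs.2])]
        linarith [hs.1]
    have hlt : P t0 < P (t0 - d) :=
      hanti ⟨le_refl _, by linarith⟩ ⟨by linarith, le_refl _⟩ (by linarith)
    have := hubM (t0 - d)
    rw [hPt0] at hlt
    linarith
  have hMle : M ≤ Vp := by
    by_contra hgt
    push_neg at hgt
    have hopen : IsOpen {s : ℝ | Vp < P s} := isOpen_lt continuous_const hcont
    have hts' : ts ∈ {s : ℝ | Vp < P s} := by
      show Vp < P ts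
      rw [← hMts]; exact hgt
    obtain ⟨ε, hε, hball⟩ := Metric.isOpen_iff.1 hopen ts hts'
    obtain ⟨n, hn1, hn2⟩ := prev_interval hT ts
    apply localdec ts n ε hn1 hn2 hMts.symm hε
    intro s _ hsc
    have hPs : Vp < P s := hball (Metric.mem_ball.2 (by rw [Real.dist_eq]; exact hsc))
    have hsh : 1/m < Real.sinh (P s) := by rw [← hsinhV]; exact Real.sinh_lt_sinh.2 hPs
    have h1m : 1 < m * Real.sinh (P s) := by
      have hinv : m * (1/m) = 1 := by field_simp
      nlinarith
    nlinarith [sw_le_one T s]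
  have hanti_sym := antisym_sol hm hT hsol hper
  have hlb : ∀ t, -M ≤ P t := by
    intro t
    have h1 := hanti_sym (t - T)
    rw [show t - T + T = t by ring] at h1
    have := hubM (t - T)
    linarith
  have habs : ∀ t, |P t| ≤ M := fun t => abs_le.2 ⟨hlb t, hubM t⟩
  have hMlt : M < Vp := by
    rcases lt_or_eq_of_le hMle with h | h
    · exact h
    exfalso
    have oddcase : ∀ (t0 : ℝ) (n : ℤ), (n:ℝ)*T < t0 → t0 ≤ ((n:ℝ)+1)*T → Odd n →
        P t0 = M → False := by
      intro t0 n h1 h2 hodd hPt0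
      have hopen : IsOpen {s : ℝ | 0 < P s} := isOpen_lt continuous_const hcont
      have ht0mem : t0 ∈ {s : ℝ | 0 < P s} := by
        show 0 < P t0
        rw [hPt0, h]
        exact hVppos
      obtain ⟨ε, hε, hball⟩ := Metric.isOpen_iff.1 hopen t0 ht0mem
      apply localdec t0 n ε h1 h2 hPt0 hε
      intro s hs hsc
      have hswm : squareWave T s = -1 := sw_Ioo_odd hT hodd hs
      have hPs : 0 < P s := hball (Metric.mem_ball.2 (by rw [Real.dist_eq]; exact hsc))
      have hsh : 0 < Real.sinh (P s) := by
        have := Real.sinh_lt_sinh.2 hPs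
        rwa [Real.sinh_zero] at this
      rw [hswm]
      nlinarith
    obtain ⟨n, hn1, hn2⟩ := prev_interval hT ts
    rcases Int.even_or_odd n with heven | hodd
    · -- even case: backward uniqueness propagates the max to the switch point
      have hub2 : ∀ s ∈ Icc ((n:ℝ)*T) ts, P s = Vp := by
        apply uniq_bwd (K := 2*m*Real.cosh Vp) (W := fun _ => Vp)
          (V' := fun s => 2*(1 - m*Real.sinh (P s))) (W' := fun _ => 0) hn1.le
          hcont.continuousOn continuousOn_const
        · intro s hs
          have hs' : s ∈ Ioo ((n:ℝ)*T) (((n:ℝ)+1)*T) := ⟨hs.1, lt_of_lt_of_le hs.2 hn2⟩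
          have hder := hsol.2 s (not_switch_Ioo hT n hs')
          rw [sw_Ioo_even hT heven hs'] at hder
          exact hder
        · intro s _
          exact hasDerivAt_const s Vp
        · intro s _
          have h1m : (1:ℝ) = m * Real.sinh Vp := by rw [hsinhV]; field_simp
          have step1 : 2*(1 - m*Real.sinh (P s)) - 0 = 2*m*(Real.sinh Vp - Real.sinh (P s)) := by
            rw [h1m]; ring
          rw [step1, abs_mul, abs_of_pos (by linarith : (0:ℝ) < 2*m)]
          have hlip : |Real.sinh Vp - Real.sinh (P s)| ≤ Real.cosh Vp * |Vp - P s| := by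
            apply sinh_lip (B := Vp)
            · rw [abs_of_pos hVppos]
            · rw [← h]; exact habs s
          calc 2*m * |Real.sinh Vp - Real.sinh (P s)| ≤ 2*m * (Real.cosh Vp * |Vp - P s|) := by
                apply mul_le_mul_of_nonneg_left hlip (by linarith)
          _ = 2*m*Real.cosh Vp * |P s - Vp| := by rw [abs_sub_comm]; ring
        · rw [← hMts, h]
      have hPc2 : P ((n:ℝ)*T) = Vp := hub2 _ ⟨le_refl _, hn1.le⟩
      apply oddcase ((n:ℝ)*T) (n-1) ?_ ?_ ?_ ?_
      · push_cast; nlinarith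
      · push_cast; nlinarith
      · obtain ⟨k, hk⟩ := heven
        exact ⟨k - 1, by omega⟩
      · rw [hPc2]; exact h.symm
    · exact oddcase ts n hn1 hn2 hodd hMts.symm
  have hderiv : ∀ s ∈ Ioo 0 T, HasDerivAt P (2*(1 - m*Real.sinh (P s))) s := by
    intro s hs
    have hs' : s ∈ Ioo (((0:ℤ):ℝ)*T) ((((0:ℤ):ℝ)+1)*T) := by
      push_cast
      simpa using hs
    have hder := hsol.2 s (not_switch_Ioo hT 0 hs')
    rw [sw_eq_one hT hs] at hder
    exact hder
  have hmono : StrictMonoOn P (Icc 0 T) := by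
    apply strictMonoOn_aux (g' := fun s => 2*(1 - m*Real.sinh (P s))) hcont.continuousOn hderiv
    intro s _
    have hsh : Real.sinh (P s) < 1/m := by
      rw [← hsinhV]
      exact Real.sinh_lt_sinh.2 (lt_of_le_of_lt (hubM s) hMlt)
    have : m * Real.sinh (P s) < 1 := by
      have := (mul_lt_mul_of_pos_left hsh hm)
      calc m * Real.sinh (P s) < m * (1/m) := this
      _ = 1 := by field_simp
    linarith
  have hPT : P T = M := by
    have key2 : ∀ t ∈ Icc 0 (2*T), P t ≤ P T := by
      intro t ht
      rcases le_total t T with hle | hle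
      · exact hmono.monotoneOn ⟨ht.1, hle⟩ (right_mem_Icc.2 hT.le) hle
      · have e1 := hanti_sym (t - T)
        rw [show t - T + T = t by ring] at e1
        have hP0T := hanti_sym 0
        rw [zero_add] at hP0T
        have hmem : t - T ∈ Icc (0:ℝ) T := ⟨by linarith, by linarith [ht.2]⟩
        have h0le : P 0 ≤ P (t - T) := hmono.monotoneOn (left_mem_Icc.2 hT.le) hmem (by linarith)
        linarith
    have h1 : P ts ≤ P T := key2 ts hts
    have h2 : P T ≤ M := hubM T
    rw [hMts]
    linarith
  have hP0 : P 0 = -M := by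
    have hP0T := hanti_sym 0
    rw [zero_add] at hP0T
    linarith [hPT]
  have hMpos : 0 < M := by
    have := hmono (left_mem_Icc.2 hT.le) (right_mem_Icc.2 hT.le) hT
    rw [hPT, hP0] at this
    linarith
  exact ⟨hMpos, hMlt, hPT, hP0, habs, hmono, hderiv⟩

end master

theorem statement1 (m : ℝ) (hm : 0 < m) (Pmax : ℝ → ℝ)
    (hPmax : ∀ T : ℝ, 0 < T → ∃ P : ℝ → ℝ,
      IsSolF m T P ∧ Function.Periodic P (2 * T) ∧ Pmax T = sSup (Set.range P)) :
    StrictMonoOn Pmax (Set.Ioi (0:ℝ)) ∧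
    Filter.Tendsto Pmax Filter.atTop (nhds (Real.arsinh (1 / m))) := by
  constructor
  · intro T1 hT1 T2 hT2 h12
    simp only [mem_Ioi] at hT1 hT2
    obtain ⟨P1, hsol1, hper1, hPmax1⟩ := hPmax T1 hT1
    obtain ⟨P2, hsol2, hper2, hPmax2⟩ := hPmax T2 hT2
    obtain ⟨hM1pos, hM1lt, hPT1, hP01, habs1, hmono1, hderiv1⟩ := master hm hT1 hsol1 hper1
    obtain ⟨hM2pos, hM2lt, hPT2, hP02, habs2, hmono2, hderiv2⟩ := master hm hT2 hsol2 hper2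
    by_contra hcon
    push_neg at hcon
    rw [hPmax1, hPmax2] at hcon
    -- hcon : sSup (range P2) ≤ sSup (range P1)
    have hivt : -(sSup (range P2)) ∈ Icc (P1 0) (P1 T1) := by
      rw [hP01, hPT1]
      constructor
      · linarith
      · linarith
    obtain ⟨a, ha, hPa⟩ := intermediate_value_Icc hT1.le hsol1.1.continuousOn hivt
    have ha1 : 0 ≤ a := ha.1
    have ha2 : a ≤ T1 := ha.2
    have heq := uniq_fwd (K := 2*m*Real.cosh (Real.arsinh (1/m)))
      (V := P1) (W := fun t => P2 (t - a))
      (V' := fun s => 2*(1 - m*Real.sinh (P1 s)))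
      (W' := fun s => 2*(1 - m*Real.sinh (P2 (s - a)))) ha2
      hsol1.1.continuousOn
      ((hsol2.1.comp (continuous_id.sub continuous_const)).continuousOn)
      (fun s hs => hderiv1 s ⟨lt_of_le_of_lt ha1 hs.1, hs.2⟩)
      (fun s hs => by
        have hmem : s - a ∈ Ioo 0 T2 := ⟨by linarith [hs.1], by linarith [hs.2]⟩
        exact HasDerivAt.comp_sub_const _ _ (hderiv2 (s - a) hmem))
      (fun s _ => by
        have e : 2*(1 - m*Real.sinh (P1 s)) - 2*(1 - m*Real.sinh (P2 (s - a))) =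
            2*m*(Real.sinh (P2 (s - a)) - Real.sinh (P1 s)) := by ring
        rw [e, abs_mul, abs_of_pos (by linarith : (0:ℝ) < 2*m)]
        have hlip : |Real.sinh (P2 (s - a)) - Real.sinh (P1 s)| ≤
            Real.cosh (Real.arsinh (1/m)) * |P2 (s - a) - P1 s| := by
          apply sinh_lip
          · exact (habs2 _).trans hM2lt.le
          · exact (habs1 _).trans hM1lt.le
        calc 2*m * |Real.sinh (P2 (s - a)) - Real.sinh (P1 s)|
            ≤ 2*m * (Real.cosh (Real.arsinh (1/m)) * |P2 (s - a) - P1 s|) := by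
              apply mul_le_mul_of_nonneg_left hlip (by linarith)
        _ = 2*m*Real.cosh (Real.arsinh (1/m)) * |P1 s - P2 (s - a)| := by
              rw [abs_sub_comm]; ring)
      (by
        show P1 a = P2 (a - a)
        rw [sub_self, hP02, hPa])
    have hfin := heq T1 (right_mem_Icc.2 ha2)
    rw [hPT1] at hfin
    -- hfin : sSup (range P1) = P2 (T1 - a)
    have hlt2 : P2 (T1 - a) < P2 T2 :=
      hmono2 ⟨by linarith, by linarith⟩ (right_mem_Icc.2 hT2.le) (by linarith)
    rw [hPT2] at hlt2
    have hfin' : sSup (range P1) = P2 (T1 - a) := hfin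
    linarith
  · rw [tendsto_order]
    constructor
    · intro a' ha'
      have hVp : 0 < Real.arsinh (1/m) := Real.arsinh_pos_iff.2 (by positivity)
      set M0 : ℝ := max a' (Real.arsinh (1/m)/2) with hM0
      have hM0lt : M0 < Real.arsinh (1/m) := max_lt ha' (by linarith)
      have hM0pos : 0 < M0 := lt_of_lt_of_le (by linarith) (le_max_right _ _)
      have hδ : 0 < 2*(1 - m*Real.sinh M0) := by
        have h1 : Real.sinh M0 < 1/m := by
          rw [← Real.sinh_arsinh (1/m)]
          exact Real.sinh_lt_sinh.2 hM0lt
        have hinv : m * (1/m) = 1 := by field_simp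
        nlinarith
      set δ := 2*(1 - m*Real.sinh M0) with hδdef
      filter_upwards [eventually_gt_atTop (max 0 (2*M0/δ))] with T hTlarge
      have hT : 0 < T := lt_of_le_of_lt (le_max_left _ _) hTlarge
      by_contra hcon
      push_neg at hcon
      obtain ⟨P, hsol, hper, hPm⟩ := hPmax T hT
      obtain ⟨hMpos, hMlt, hPT, hP0, habs, hmono, hderiv⟩ := master hm hT hsol hper
      rw [hPm] at hcon
      have hMM0 : sSup (range P) ≤ M0 := hcon.trans (le_max_left _ _)
      have hmono2 : MonotoneOn (fun t => P t - δ*t) (Icc 0 T) := by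
        apply monoOn_aux (g' := fun s => 2*(1 - m*Real.sinh (P s)) - δ)
        · exact (hsol.1.sub (continuous_const.mul continuous_id)).continuousOn
        · intro s hs
          have hd : HasDerivAt (fun t : ℝ => δ*t) δ s := by
            simpa using (hasDerivAt_id s).const_mul δ
          exact (hderiv s hs).sub hd
        · intro s _
          have h1 : P s ≤ M0 := le_trans (le_trans (le_abs_self _) (habs s)) hMM0
          have h2 : Real.sinh (P s) ≤ Real.sinh M0 := Real.sinh_le_sinh.2 h1
          rw [hδdef]
          nlinarith
      have hcomp := hmono2 (left_mem_Icc.2 hT.le) (right_mem_Icc.2 hT.le) hT.le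
      simp only [mul_zero, sub_zero] at hcomp
      -- hcomp : P 0 ≤ P T - δ*T
      rw [hP0, hPT] at hcomp
      have hT2 : δ*T ≤ 2*M0 := by linarith
      have hle : T ≤ 2*M0/δ := by
        rw [le_div_iff₀ hδ]
        linarith [mul_comm δ T]
      have hgt : 2*M0/δ < T := lt_of_le_of_lt (le_max_right _ _) hTlarge
      linarith
    · intro a' ha'
      filter_upwards [eventually_gt_atTop 0] with T hT
      obtain ⟨P, hsol, hper, hPm⟩ := hPmax T hT
      obtain ⟨_, hMlt, _⟩ := master hm hT hsol hper
      rw [hPm]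
      linarith
end

section
/- Let m > 0 and T > 0, and let P^+_{m,T} be the maximum value of the unique 2T-periodic solution of the switched system F(m,T). Set A = √(1 + m²) and B = tanh(T·A). Then tanh(P^+_{m,T}/2) = (A − √(A² − B²))/B. Equivalently, P^+_{m,T} = 2·artanh((A − √(A² − B²))/B), and the minimum value of the periodic solution is P^−_{m,T} = −P^+_{m,T}. -/
open Real Filter Set

/-- The inverse hyperbolic tangent. -/
noncomputable def artanh (x : ℝ) : ℝ := Real.log ((1 + x) / (1 - x)) / 2

namespace SW

variable (m T : ℝ)

noncomputable def AA : ℝ := Real.sqrt (1 + m ^ 2)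
noncomputable def BB : ℝ := Real.tanh (T * AA m)
noncomputable def DD : ℝ := Real.sqrt ((AA m) ^ 2 - (BB m T) ^ 2)
noncomputable def ww1 : ℝ := (AA m - DD m T) / BB m T

variable {m T}

lemma AA_sq (m : ℝ) : (AA m) ^ 2 = 1 + m ^ 2 := Real.sq_sqrt (by positivity)

lemma one_lt_AA (hm : 0 < m) : 1 < AA m := by
  rw [AA, show (1:ℝ) < Real.sqrt (1 + m^2) ↔ 1^2 < 1 + m^2 from Real.lt_sqrt one_pos.le]
  nlinarith

lemma AA_pos (hm : 0 < m) : 0 < AA m := lt_trans one_pos (one_lt_AA hm)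

lemma m_lt_AA (hm : 0 < m) : m < AA m := by
  rw [AA, show m < Real.sqrt (1 + m^2) ↔ m^2 < 1 + m^2 from Real.lt_sqrt hm.le]
  nlinarith

lemma tanh_exp (x : ℝ) : Real.tanh x = (Real.exp (2*x) - 1) / (Real.exp (2*x) + 1) := by
  rw [Real.tanh_eq_sinh_div_cosh, Real.sinh_eq, Real.cosh_eq]
  have h1 : Real.exp x ≠ 0 := (Real.exp_pos x).ne'
  have h2 : Real.exp (2*x) = Real.exp x * Real.exp x := by
    rw [← Real.exp_add]; ring_nf
  have h3 : Real.exp (-x) = (Real.exp x)⁻¹ := by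
    rw [← Real.exp_neg]
  have h4 : 0 < Real.exp x * Real.exp x + 1 := by positivity
  rw [h2, h3]
  field_simp

lemma tanh_pos_lt_one {x : ℝ} (hx : 0 < x) : 0 < Real.tanh x ∧ Real.tanh x < 1 := by
  rw [tanh_exp]
  have h1 : 1 < Real.exp (2*x) := by
    rw [← Real.exp_zero]; exact Real.exp_lt_exp.2 (by linarith)
  constructor
  · apply div_pos (by linarith) (by linarith)
  · rw [div_lt_one (by linarith)]; linarith

lemma BB_pos (hm : 0 < m) (hT : 0 < T) : 0 < BB m T :=
  (tanh_pos_lt_one (mul_pos hT (AA_pos hm))).1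

lemma BB_lt_one (hm : 0 < m) (hT : 0 < T) : BB m T < 1 :=
  (tanh_pos_lt_one (mul_pos hT (AA_pos hm))).2

lemma DD_sq (hm : 0 < m) (hT : 0 < T) : (DD m T) ^ 2 = (AA m) ^ 2 - (BB m T) ^ 2 := by
  apply Real.sq_sqrt
  have h1 := BB_lt_one hm hT
  have h2 := BB_pos hm hT
  have h3 := one_lt_AA hm
  nlinarith

lemma m_lt_DD (hm : 0 < m) (hT : 0 < T) : m < DD m T := by
  have h2 := AA_sq m
  have h3 := BB_lt_one hm hT
  have h4 := BB_pos hm hT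
  rw [DD, show m < Real.sqrt ((AA m)^2 - (BB m T)^2) ↔ m^2 < (AA m)^2 - (BB m T)^2 from Real.lt_sqrt hm.le]
  nlinarith

lemma DD_pos (hm : 0 < m) (hT : 0 < T) : 0 < DD m T := lt_trans hm (m_lt_DD hm hT)

lemma DD_lt_AA (hm : 0 < m) (hT : 0 < T) : DD m T < AA m := by
  have h1 := DD_sq hm hT
  have h2 := BB_pos hm hT
  have h3 := DD_pos hm hT
  have h4 := AA_pos hm
  nlinarith

lemma ww1_pos (hm : 0 < m) (hT : 0 < T) : 0 < ww1 m T :=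
  div_pos (by linarith [DD_lt_AA hm hT]) (BB_pos hm hT)

lemma ww1_eq (hm : 0 < m) (hT : 0 < T) : ww1 m T = BB m T / (AA m + DD m T) := by
  have h1 := DD_sq hm hT
  have h2 := BB_pos hm hT
  have h3 := DD_pos hm hT
  have h4 := AA_pos hm
  rw [ww1, div_eq_div_iff h2.ne' (by positivity)]
  nlinarith

lemma ww1_lt (hm : 0 < m) (hT : 0 < T) : ww1 m T < AA m - m := by
  rw [ww1_eq hm hT]
  have h2 := BB_pos hm hT
  have h3 := m_lt_DD hm hT
  have h4 := AA_pos hm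
  have h5 := BB_lt_one hm hT
  rw [div_lt_iff₀ (by linarith)]
  have h6 : BB m T < (AA m - m) * (AA m + m) := by nlinarith [AA_sq m]
  have h7 : (AA m - m) * (AA m + m) ≤ (AA m - m) * (AA m + DD m T) := by
    apply mul_le_mul_of_nonneg_left (by linarith) (by linarith [m_lt_AA hm])
  linarith

lemma AA_sub_m_lt_one (hm : 0 < m) : AA m - m < 1 := by
  have h1 := AA_sq m
  have h2 := m_lt_AA hm
  nlinarith

lemma ww1_lt_one (hm : 0 < m) (hT : 0 < T) : ww1 m T < 1 :=
  lt_trans (ww1_lt hm hT) (by linarith [AA_sub_m_lt_one hm])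

/-- key quadratic identity -/
lemma quad (hm : 0 < m) (hT : 0 < T) :
    BB m T * (1 + ww1 m T ^ 2) = 2 * AA m * ww1 m T := by
  have h1 := DD_sq hm hT
  have h2 := BB_pos hm hT
  have h3 := DD_pos hm hT
  have h4 := AA_pos hm
  rw [ww1_eq hm hT]
  field_simp
  linear_combination h1

/-! ### _root_.artanh lemmas -/

lemma artanh_defn (x : ℝ) : _root_.artanh x = Real.log ((1 + x) / (1 - x)) / 2 := rfl

lemma exp_two_artanh {x : ℝ} (h1 : -1 < x) (h2 : x < 1) :
    Real.exp (2 * _root_.artanh x) = (1 + x) / (1 - x) := by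
  rw [artanh_defn, show 2 * (Real.log ((1+x)/(1-x)) / 2) = Real.log ((1+x)/(1-x)) by ring]
  exact Real.exp_log (by apply div_pos <;> linarith)

lemma artanh_neg {x : ℝ} (h1 : -1 < x) (h2 : x < 1) : _root_.artanh (-x) = - _root_.artanh x := by
  rw [artanh_defn, artanh_defn, show (1 + -x) / (1 - -x) = ((1+x)/(1-x))⁻¹ by
    rw [inv_div]; ring_nf, Real.log_inv]
  ring

lemma tanh_artanh {x : ℝ} (h1 : -1 < x) (h2 : x < 1) : Real.tanh (_root_.artanh x) = x := by
  rw [tanh_exp, exp_two_artanh h1 h2]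
  have hx : (1:ℝ) - x ≠ 0 := by linarith
  field_simp
  ring

lemma sinh_two_artanh {x : ℝ} (h1 : -1 < x) (h2 : x < 1) :
    Real.sinh (2 * _root_.artanh x) = 2 * x / (1 - x^2) := by
  rw [Real.sinh_eq, exp_two_artanh h1 h2, Real.exp_neg, exp_two_artanh h1 h2]
  have ha : (1:ℝ) - x ≠ 0 := by linarith
  have hb : (1:ℝ) + x ≠ 0 := by linarith
  have hc : (1:ℝ) - x^2 ≠ 0 := by intro h; nlinarith
  field_simp
  ring

lemma artanh_le_artanh {a b : ℝ} (h1 : -1 < a) (hab : a ≤ b) (h2 : b < 1) :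
    _root_.artanh a ≤ _root_.artanh b := by
  rw [artanh_defn, artanh_defn]
  have hb0 : (0:ℝ) < (1 + a) / (1 - a) := by apply div_pos <;> linarith
  have hlog : Real.log ((1 + a) / (1 - a)) ≤ Real.log ((1 + b) / (1 - b)) := by
    apply Real.log_le_log hb0
    rw [div_le_div_iff₀ (by linarith) (by linarith)]
    nlinarith
  linarith

lemma hasDerivAt_artanh {x : ℝ} (h1 : -1 < x) (h2 : x < 1) :
    HasDerivAt _root_.artanh (1 / (1 - x^2)) x := by
  have ha : (1:ℝ) - x ≠ 0 := by linarith
  have hb : (1:ℝ) + x ≠ 0 := by linarith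
  have hd : HasDerivAt (fun y : ℝ => (1 + y) / (1 - y)) (2 / (1 - x)^2) x := by
    have h3 : HasDerivAt (fun y : ℝ => 1 + y) 1 x := by
      simpa using (hasDerivAt_id x).const_add 1
    have h4 : HasDerivAt (fun y : ℝ => 1 - y) (-1) x := by
      simpa using (hasDerivAt_id x).const_sub 1
    have := h3.div h4 ha
    refine this.congr_deriv ?_
    field_simp
    ring
  have hne : (1 + x) / (1 - x) ≠ 0 := div_ne_zero hb ha
  have hc : (1:ℝ) - x^2 ≠ 0 := fun h => by nlinarith
  have := (hd.log hne).div_const 2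
  refine this.congr_deriv ?_
  field_simp
  ring

/-! ### the explicit solution pieces -/

variable (m T)

noncomputable def cc : ℝ := Real.log ((AA m + m - ww1 m T) / (AA m - m + ww1 m T))
noncomputable def EE (t : ℝ) : ℝ := Real.exp (2 * AA m * t + cc m T)
noncomputable def ww (t : ℝ) : ℝ := AA m - m - 2 * AA m / (EE m T t + 1)
noncomputable def ff (t : ℝ) : ℝ := 2 * _root_.artanh (ww m T t)

variable {m T}

lemma EE_pos (t : ℝ) : 0 < EE m T t := Real.exp_pos _

lemma num_pos (hm : 0 < m) (hT : 0 < T) : 0 < AA m + m - ww1 m T := by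
  have := ww1_lt_one hm hT
  have := one_lt_AA hm
  linarith

lemma den_pos (hm : 0 < m) (hT : 0 < T) : 0 < AA m - m + ww1 m T := by
  have := ww1_pos hm hT
  have := m_lt_AA hm
  linarith

lemma EE_zero (hm : 0 < m) (hT : 0 < T) :
    EE m T 0 = (AA m + m - ww1 m T) / (AA m - m + ww1 m T) := by
  rw [EE, mul_zero, zero_add, cc]
  exact Real.exp_log (div_pos (num_pos hm hT) (den_pos hm hT))

lemma ww_zero (hm : 0 < m) (hT : 0 < T) : ww m T 0 = - ww1 m T := by
  have h1 := num_pos hm hT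
  have h2 := den_pos hm hT
  have hA : AA m ≠ 0 := (AA_pos hm).ne'
  have key : (AA m + m - ww1 m T) / (AA m - m + ww1 m T) + 1
      = 2 * AA m / (AA m - m + ww1 m T) := by
    field_simp
    ring
  have key2 : 2 * AA m / (2 * AA m / (AA m - m + ww1 m T)) = AA m - m + ww1 m T := by
    rw [div_div_eq_mul_div]
    field_simp
  rw [ww, EE_zero hm hT, key, key2]
  ring

lemma exp_2TA (hm : 0 < m) (hT : 0 < T) :
    Real.exp (2 * AA m * T) = (1 + BB m T) / (1 - BB m T) := by
  have h1 := BB_lt_one hm hT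
  have h2 := BB_pos hm hT
  have h3 : BB m T = (Real.exp (2*(T * AA m)) - 1) / (Real.exp (2*(T * AA m)) + 1) :=
    tanh_exp (T * AA m)
  have h4 : (0:ℝ) < Real.exp (2*(T * AA m)) + 1 := by positivity
  rw [show 2 * AA m * T = 2 * (T * AA m) by ring, eq_div_iff (by linarith)]
  rw [eq_div_iff (by linarith)] at h3
  linarith [h3]

lemma EE_T (hm : 0 < m) (hT : 0 < T) :
    EE m T T = (AA m + m + ww1 m T) / (AA m - m - ww1 m T) := by
  have h1 := num_pos hm hT
  have h2 := den_pos hm hT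
  have h3 : 0 < AA m - m - ww1 m T := by linarith [ww1_lt hm hT]
  have h4 := BB_pos hm hT
  have h5 := BB_lt_one hm hT
  have h6 : 0 < ww1 m T := ww1_pos hm hT
  have hq := quad hm hT
  have hEsplit : EE m T T = Real.exp (2 * AA m * T) * EE m T 0 := by
    rw [EE, EE, ← Real.exp_add]
    ring_nf
  rw [hEsplit, exp_2TA hm hT, EE_zero hm hT]
  rw [div_mul_div_comm, div_eq_div_iff (mul_pos (show (0:ℝ) < 1 - BB m T by linarith) h2).ne' h3.ne']
  linear_combination 2 * BB m T * AA_sq m + 2 * hq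

lemma ww_T (hm : 0 < m) (hT : 0 < T) : ww m T T = ww1 m T := by
  have h3 : 0 < AA m - m - ww1 m T := by linarith [ww1_lt hm hT]
  have h6 : 0 < ww1 m T := ww1_pos hm hT
  have hA : (0:ℝ) < AA m := AA_pos hm
  have key : (AA m + m + ww1 m T) / (AA m - m - ww1 m T) + 1
      = 2 * AA m / (AA m - m - ww1 m T) := by
    field_simp
    ring
  have key2 : 2 * AA m / (2 * AA m / (AA m - m - ww1 m T)) = AA m - m - ww1 m T := by
    rw [div_div_eq_mul_div]
    field_simp
  rw [ww, EE_T hm hT, key, key2]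
  ring

lemma ww_mono (hm : 0 < m) {s t : ℝ} (hst : s ≤ t) : ww m T s ≤ ww m T t := by
  have hE : EE m T s ≤ EE m T t := by
    rw [EE, EE]
    apply Real.exp_le_exp.2
    have := AA_pos hm
    nlinarith
  rw [ww, ww]
  have h1 : 0 < EE m T s + 1 := by linarith [EE_pos (m := m) (T := T) s]
  have h2 : 0 < EE m T t + 1 := by linarith [EE_pos (m := m) (T := T) t]
  have h3 : 2 * AA m / (EE m T t + 1) ≤ 2 * AA m / (EE m T s + 1) := by
    apply div_le_div_of_nonneg_left (by linarith [AA_pos hm]) h1 (by linarith)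
  linarith

lemma ww_bounds (hm : 0 < m) (hT : 0 < T) {t : ℝ} (ht : t ∈ Icc 0 T) :
    - ww1 m T ≤ ww m T t ∧ ww m T t ≤ ww1 m T := by
  constructor
  · rw [← ww_zero hm hT]; exact ww_mono hm ht.1
  · rw [← ww_T hm hT]; exact ww_mono hm ht.2

lemma ww_in_Ioo (hm : 0 < m) (hT : 0 < T) {t : ℝ} (ht : t ∈ Icc 0 T) :
    -1 < ww m T t ∧ ww m T t < 1 := by
  obtain ⟨hl, hr⟩ := ww_bounds hm hT ht
  have := ww1_lt_one hm hT
  constructor <;> linarith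

lemma hasDerivAt_ww (hm : 0 < m) (t : ℝ) :
    HasDerivAt (ww m T) (1 - (ww m T t)^2 - 2 * m * (ww m T t)) t := by
  have hE : HasDerivAt (EE m T) (2 * AA m * EE m T t) t := by
    have h : HasDerivAt (fun u : ℝ => 2 * AA m * u + cc m T) (2 * AA m) t := by
      simpa using ((hasDerivAt_id t).const_mul (2 * AA m)).add_const (cc m T)
    have h3 := h.exp
    convert h3 using 1
    · rfl
    rw [show EE m T t = Real.exp (2 * AA m * t + cc m T) from rfl]
    ring
  have hE1 : EE m T t + 1 ≠ 0 := by linarith [EE_pos (m := m) (T := T) t]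
  have hinv : HasDerivAt (fun u => EE m T u + 1) (2 * AA m * EE m T t) t := hE.add_const 1
  have hfun : ww m T = fun u => (AA m - m) - 2 * AA m * (EE m T u + 1)⁻¹ := by
    funext u
    rw [show ww m T u = AA m - m - 2 * AA m / (EE m T u + 1) from rfl, div_eq_mul_inv]
  have h3 : HasDerivAt (ww m T)
      (-(2 * AA m * (-(2 * AA m * EE m T t) / (EE m T t + 1)^2))) t := by
    rw [hfun]
    exact ((hinv.inv hE1).const_mul (2 * AA m)).const_sub (AA m - m)
  convert h3 using 1
  have hAsq := AA_sq m
  rw [show ww m T t = AA m - m - 2 * AA m / (EE m T t + 1) from rfl]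
  have he : EE m T t + 1 ≠ 0 := hE1
  field_simp
  linear_combination (-(EE m T t + 1)^2) * hAsq

lemma hasDerivAt_ff (hm : 0 < m) {t : ℝ} (h1 : -1 < ww m T t) (h2 : ww m T t < 1) :
    HasDerivAt (ff m T) (2 * (1 - m * Real.sinh (ff m T t))) t := by
  have hw := hasDerivAt_ww (T := T) hm t
  have ha := hasDerivAt_artanh h1 h2
  have hcomp := (ha.comp t hw).const_mul 2
  have hne : 1 - (ww m T t)^2 ≠ 0 := fun h => by nlinarith
  have key : Real.sinh (ff m T t) = 2 * ww m T t / (1 - (ww m T t)^2) := by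
    rw [show ff m T t = 2 * _root_.artanh (ww m T t) from rfl]
    exact sinh_two_artanh h1 h2
  have hval : 2 * (1 - m * Real.sinh (ff m T t))
      = 2 * (1 / (1 - (ww m T t)^2) * (1 - (ww m T t)^2 - 2 * m * (ww m T t))) := by
    rw [key]
    field_simp
  rw [hval]
  exact hcomp

lemma ff_T_eq (hm : 0 < m) (hT : 0 < T) : ff m T T = 2 * _root_.artanh (ww1 m T) := by
  rw [ff, ww_T hm hT]

lemma ff_zero_eq (hm : 0 < m) (hT : 0 < T) : ff m T 0 = - ff m T T := by
  rw [ff, ff, ww_zero hm hT, ww_T hm hT]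
  have h1 := ww1_pos hm hT
  have h2 := ww1_lt_one hm hT
  rw [artanh_neg (by linarith) h2]
  ring

lemma ff_mono (hm : 0 < m) (hT : 0 < T) {s t : ℝ} (hs : s ∈ Icc 0 T) (ht : t ∈ Icc 0 T)
    (hst : s ≤ t) : ff m T s ≤ ff m T t := by
  obtain ⟨hs1, hs2⟩ := ww_in_Ioo hm hT hs
  obtain ⟨ht1, ht2⟩ := ww_in_Ioo hm hT ht
  rw [ff, ff]
  have := artanh_le_artanh hs1 (ww_mono hm hst) ht2
  linarith

lemma ff_cont (hm : 0 < m) (hT : 0 < T) {t : ℝ} (ht : t ∈ Icc 0 T) :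
    ContinuousAt (ff m T) t := by
  obtain ⟨h1, h2⟩ := ww_in_Ioo hm hT ht
  exact (hasDerivAt_ff hm h1 h2).continuousAt

/-! ### the global piecewise solution -/

variable (m T)

noncomputable def QQ (t : ℝ) : ℝ :=
  if t - 2*T*(⌊t/(2*T)⌋ : ℤ) < T then ff m T (t - 2*T*(⌊t/(2*T)⌋ : ℤ))
  else - ff m T (t - 2*T*(⌊t/(2*T)⌋ : ℤ) - T)

variable {m T}

lemma floor_div_eq (hT : 0 < T) {n : ℤ} {t : ℝ} (h1 : 2*n*T ≤ t) (h2 : t < 2*n*T + 2*T) :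
    ⌊t/(2*T)⌋ = n := by
  rw [Int.floor_eq_iff]
  constructor
  · rw [le_div_iff₀ (by linarith)]
    push_cast
    linarith
  · rw [div_lt_iff₀ (by linarith)]
    push_cast
    linarith

lemma QQ_per (hT : 0 < T) : Function.Periodic (QQ m T) (2*T) := by
  intro t
  have hfl : ⌊(t + 2*T)/(2*T)⌋ = ⌊t/(2*T)⌋ + 1 := by
    rw [show (t + 2*T)/(2*T) = t/(2*T) + 1 by field_simp]
    exact Int.floor_add_one _
  rw [QQ, QQ, hfl]
  push_cast
  ring_nf

lemma QQ_eqOn_up (hm : 0 < m) (hT : 0 < T) (n : ℤ) {u : ℝ}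
    (hu : u ∈ Icc (2*n*T) (2*n*T + T)) : QQ m T u = ff m T (u - 2*n*T) := by
  have hfl : ⌊u/(2*T)⌋ = n := floor_div_eq hT hu.1 (by linarith [hu.2])
  rw [QQ, hfl]
  rcases lt_or_eq_of_le hu.2 with h | h
  · rw [if_pos (by push_cast; linarith)]
    congr 1
    ring
  · rw [if_neg (by push_cast; linarith)]
    rw [show u - 2*T*((n:ℤ):ℝ) - T = 0 by push_cast; linarith]
    rw [ff_zero_eq hm hT, show u - 2*((n:ℤ):ℝ)*T = T by push_cast; linarith]
    ring

lemma QQ_eqOn_down (hm : 0 < m) (hT : 0 < T) (n : ℤ) {u : ℝ}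
    (hu : u ∈ Icc (2*n*T + T) (2*n*T + 2*T)) : QQ m T u = - ff m T (u - 2*n*T - T) := by
  rcases lt_or_eq_of_le hu.2 with h | h
  · have hfl : ⌊u/(2*T)⌋ = n := floor_div_eq hT (by linarith [hu.1]) h
    rw [QQ, hfl]
    rw [if_neg (by push_cast; linarith [hu.1])]
    rw [show u - 2*T*((n:ℤ):ℝ) - T = u - 2*((n:ℤ):ℝ)*T - T by ring]
  · have hfl : ⌊u/(2*T)⌋ = n + 1 := floor_div_eq hT (by push_cast; linarith) (by push_cast; linarith)
    rw [QQ, hfl]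
    push_cast
    rw [if_pos (by linarith)]
    rw [show u - 2*T*((n:ℝ) + 1) = 0 by linarith,
      show u - 2*(n:ℝ)*T - T = T by linarith]
    exact ff_zero_eq hm hT

lemma sqw_up (hT : 0 < T) {n : ℤ} {t : ℝ} (h1 : 2*n*T < t) (h2 : t < 2*n*T + T) :
    squareWave T t = 1 := by
  have key : t/(2*T) = (n : ℝ) + (t - 2*n*T)/(2*T) := by field_simp; ring
  rw [squareWave, if_pos]
  rw [key, show ((n:ℝ) + (t - 2*n*T)/(2*T)) = ((n:ℤ):ℝ) + (t - 2*n*T)/(2*T) by push_cast; ring,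
    Int.fract_intCast_add, Int.fract_eq_self.2 ⟨div_nonneg (by linarith) (by linarith), by rw [div_lt_one (by linarith)]; linarith⟩]
  rw [div_lt_div_iff₀ (by linarith) (by norm_num)]
  linarith

lemma sqw_down (hT : 0 < T) {n : ℤ} {t : ℝ} (h1 : 2*n*T + T < t) (h2 : t < 2*n*T + 2*T) :
    squareWave T t = -1 := by
  have key : t/(2*T) = (n : ℝ) + (t - 2*n*T)/(2*T) := by field_simp; ring
  rw [squareWave, if_neg]
  rw [key, show ((n:ℝ) + (t - 2*n*T)/(2*T)) = ((n:ℤ):ℝ) + (t - 2*n*T)/(2*T) by push_cast; ring,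
    Int.fract_intCast_add, Int.fract_eq_self.2 ⟨div_nonneg (by linarith) (by linarith), by rw [div_lt_one (by linarith)]; linarith⟩]
  push_neg
  rw [div_le_div_iff₀ (by norm_num) (by linarith)]
  linarith

lemma QQ_deriv (hm : 0 < m) (hT : 0 < T) {t : ℝ} (ht : ∀ n : ℤ, t ≠ n * T) :
    HasDerivAt (QQ m T) (2 * (squareWave T t - m * Real.sinh (QQ m T t))) t := by
  set n : ℤ := ⌊t/(2*T)⌋ with hn
  have h2T : (0:ℝ) < 2*T := by linarith
  have hfl : (n : ℝ) ≤ t/(2*T) ∧ t/(2*T) < n + 1 := ⟨Int.floor_le _, Int.lt_floor_add_one _⟩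
  have hlb : 2*n*T ≤ t := by
    have := hfl.1
    rw [le_div_iff₀ h2T] at this
    linarith
  have hub : t < 2*n*T + 2*T := by
    have := hfl.2
    rw [div_lt_iff₀ h2T] at this
    push_cast at this
    linarith
  have hne0 : t ≠ 2*n*T := by
    intro h
    exact ht (2*n) (by push_cast; linarith [h])
  have hneT : t ≠ 2*n*T + T := by
    intro h
    exact ht (2*n+1) (by push_cast; linarith [h])
  have hlb' : 2*n*T < t := lt_of_le_of_ne hlb (Ne.symm hne0)
  rcases lt_or_gt_of_ne hneT with hcase | hcase
  · -- up phase
    have hs : t - 2*n*T ∈ Icc (0:ℝ) T := ⟨by linarith, by linarith⟩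
    obtain ⟨hw1, hw2⟩ := ww_in_Ioo hm hT hs
    have hff := hasDerivAt_ff hm hw1 hw2
    have htrans : HasDerivAt (fun u : ℝ => u - 2*n*T) 1 t := (hasDerivAt_id t).sub_const _
    have hcomp := HasDerivAt.comp t hff htrans
    have heq : (fun u => ff m T (u - 2*n*T)) =ᶠ[nhds t] QQ m T := by
      filter_upwards [Ioo_mem_nhds hlb' hcase] with u hu
      exact (QQ_eqOn_up hm hT n ⟨hu.1.le, hu.2.le⟩).symm
    have hQt : QQ m T t = ff m T (t - 2*n*T) := QQ_eqOn_up hm hT n ⟨by linarith [hs.1], by linarith⟩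
    have := hcomp.congr_of_eventuallyEq heq.symm
    rw [hQt, sqw_up hT hlb' hcase]
    refine this.congr_deriv ?_
    ring
  · -- down phase
    have hs : t - 2*n*T - T ∈ Icc (0:ℝ) T := ⟨by linarith, by linarith⟩
    obtain ⟨hw1, hw2⟩ := ww_in_Ioo hm hT hs
    have hff := hasDerivAt_ff hm hw1 hw2
    have htrans : HasDerivAt (fun u : ℝ => u - 2*n*T - T) 1 t := by
      simpa using ((hasDerivAt_id t).sub_const (2*(n:ℝ)*T)).sub_const T
    have hcomp := (HasDerivAt.comp t hff htrans).neg
    have heq : (fun u => - ff m T (u - 2*n*T - T)) =ᶠ[nhds t] QQ m T := by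
      filter_upwards [Ioo_mem_nhds hcase hub] with u hu
      exact (QQ_eqOn_down hm hT n ⟨hu.1.le, hu.2.le⟩).symm
    have hQt : QQ m T t = - ff m T (t - 2*n*T - T) := QQ_eqOn_down hm hT n ⟨by linarith, by linarith⟩
    have := hcomp.congr_of_eventuallyEq heq.symm
    rw [hQt, sqw_down hT hcase hub, Real.sinh_neg]
    refine this.congr_deriv ?_
    ring

/-! ### uniqueness of the periodic solution -/

lemma QQ_up0 (hm : 0 < m) (hT : 0 < T) {u : ℝ} (hu : u ∈ Icc 0 T) :
    QQ m T u = ff m T u := by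
  have h := QQ_eqOn_up hm hT 0 (u := u) ⟨by push_cast; simpa using hu.1,
    by push_cast; simpa using hu.2⟩
  simpa using h

lemma QQ_down0 (hm : 0 < m) (hT : 0 < T) {u : ℝ} (hu : u ∈ Icc T (2*T)) :
    QQ m T u = - ff m T (u - T) := by
  have h := QQ_eqOn_down hm hT 0 (u := u) ⟨by push_cast; simpa using hu.1,
    by push_cast; simpa using hu.2⟩
  simpa using h

lemma QQ_contOn_up (hm : 0 < m) (hT : 0 < T) : ContinuousOn (QQ m T) (Icc 0 T) := by
  apply ContinuousOn.congr (f := ff m T)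
  · intro u hu
    exact ((ff_cont hm hT hu)).continuousWithinAt
  · intro u hu
    exact QQ_up0 hm hT hu

lemma QQ_contOn_down (hm : 0 < m) (hT : 0 < T) : ContinuousOn (QQ m T) (Icc T (2*T)) := by
  apply ContinuousOn.congr (f := fun u => - ff m T (u - T))
  · intro u hu
    apply ContinuousWithinAt.neg
    apply ContinuousAt.continuousWithinAt
    have hcont : ContinuousAt (ff m T) (u - T) :=
      ff_cont hm hT ⟨by linarith [hu.1], by linarith [hu.2]⟩
    have hsub : ContinuousAt (fun u : ℝ => u - T) u := (continuous_sub_right T).continuousAt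
    exact ContinuousAt.comp (g := ff m T) hcont hsub
  · intro u hu
    exact QQ_down0 hm hT hu

lemma ne_switch1 (hT : 0 < T) {t : ℝ} (ht : t ∈ Ioo 0 T) : ∀ n : ℤ, t ≠ n * T := by
  intro n hn
  have h1 : 0 < (n:ℝ) * T := hn ▸ ht.1
  have h2 : (n:ℝ) * T < T := hn ▸ ht.2
  have h3 : (0:ℝ) < (n:ℝ) := by nlinarith
  have h4 : (n:ℝ) < 1 := by nlinarith
  have h5 : (0:ℤ) < n := by exact_mod_cast h3
  have h6 : n < 1 := by exact_mod_cast h4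
  omega

lemma ne_switch2 (hT : 0 < T) {t : ℝ} (ht : t ∈ Ioo T (2*T)) : ∀ n : ℤ, t ≠ n * T := by
  intro n hn
  have h1 : T < (n:ℝ) * T := hn ▸ ht.1
  have h2 : (n:ℝ) * T < 2*T := hn ▸ ht.2
  have h3 : (1:ℝ) < (n:ℝ) := by nlinarith
  have h4 : (n:ℝ) < 2 := by nlinarith
  have h5 : (1:ℤ) < n := by exact_mod_cast h3
  have h6 : n < 2 := by exact_mod_cast h4
  omega

lemma sinh_mono_mul_nonneg (x y : ℝ) : 0 ≤ (x - y) * (Real.sinh x - Real.sinh y) := by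
  rcases le_total x y with h | h
  · have h2 := Real.sinh_le_sinh.2 h
    nlinarith
  · have h2 := Real.sinh_le_sinh.2 h
    nlinarith

lemma P_eq_QQ (hm : 0 < m) (hT : 0 < T) {P : ℝ → ℝ} (hP : IsSolF m T P)
    (hPper : Function.Periodic P (2*T)) {y : ℝ} (hy : y ∈ Icc 0 (2*T)) :
    P y = QQ m T y := by
  obtain ⟨hPc, hPd⟩ := hP
  set g : ℝ → ℝ := fun t => (P t - QQ m T t)^2 with hgdef
  have hder : ∀ t : ℝ, (∀ n : ℤ, t ≠ n*T) → HasDerivAt g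
      (-4*m*((P t - QQ m T t) * (Real.sinh (P t) - Real.sinh (QQ m T t)))) t := by
    intro t ht
    have h1 := hPd t ht
    have h2 := QQ_deriv hm hT ht
    have h3 := (h1.sub h2).pow 2
    refine h3.congr_deriv ?_
    simp only [Pi.sub_apply]
    ring
  have hanti1 : AntitoneOn g (Icc 0 T) := by
    apply antitoneOn_of_deriv_nonpos (convex_Icc _ _)
    · exact ((hPc.continuousOn.sub (QQ_contOn_up hm hT)).pow 2)
    · rw [interior_Icc]
      intro t ht
      exact ((hder t (ne_switch1 hT ht)).differentiableAt).differentiableWithinAt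
    · rw [interior_Icc]
      intro t ht
      rw [(hder t (ne_switch1 hT ht)).deriv]
      have := sinh_mono_mul_nonneg (P t) (QQ m T t)
      nlinarith
  have hanti2 : AntitoneOn g (Icc T (2*T)) := by
    apply antitoneOn_of_deriv_nonpos (convex_Icc _ _)
    · exact ((hPc.continuousOn.sub (QQ_contOn_down hm hT)).pow 2)
    · rw [interior_Icc]
      intro t ht
      exact ((hder t (ne_switch2 hT ht)).differentiableAt).differentiableWithinAt
    · rw [interior_Icc]
      intro t ht
      rw [(hder t (ne_switch2 hT ht)).deriv]
      have := sinh_mono_mul_nonneg (P t) (QQ m T t)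
      nlinarith
  have hT0 : (0:ℝ) ∈ Icc (0:ℝ) T := ⟨le_refl _, hT.le⟩
  have hTT : T ∈ Icc (0:ℝ) T := ⟨hT.le, le_refl _⟩
  have hTT' : T ∈ Icc T (2*T) := ⟨le_refl _, by linarith⟩
  have h2T : 2*T ∈ Icc T (2*T) := ⟨by linarith, le_refl _⟩
  have hgper : g (2*T) = g 0 := by
    have h1 : P (2*T) = P 0 := by simpa using hPper 0
    have h2 : QQ m T (2*T) = QQ m T 0 := by simpa using QQ_per hT 0
    simp only [hgdef, h1, h2]
  have hchain1 : g T ≤ g 0 := hanti1 hT0 hTT hT.le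
  have hchain2 : g (2*T) ≤ g T := hanti2 hTT' h2T (by linarith)
  have hgT : g T = g 0 := le_antisymm hchain1 (by rw [← hgper]; exact hchain2)
  have hconst1 : ∀ t ∈ Icc (0:ℝ) T, g t = g 0 := by
    intro t ht
    have h1 : g t ≤ g 0 := hanti1 hT0 ht ht.1
    have h2 : g T ≤ g t := hanti1 ht hTT ht.2
    linarith [hgT]
  have hconst2 : ∀ t ∈ Icc T (2*T), g t = g 0 := by
    intro t ht
    have h1 : g t ≤ g T := hanti2 hTT' ht ht.1
    have h2 : g (2*T) ≤ g t := hanti2 ht h2T ht.2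
    linarith [hgT, hgper]
  -- interior: derivative of g vanishes, giving P = QQ there
  have hmid : g (T/2) = 0 := by
    have htmid : T/2 ∈ Ioo (0:ℝ) T := ⟨by linarith, by linarith⟩
    have hd := hder (T/2) (ne_switch1 hT htmid)
    have hzero : HasDerivAt g 0 (T/2) := by
      apply (hasDerivAt_const (T/2) (g 0)).congr_of_eventuallyEq
      filter_upwards [Ioo_mem_nhds htmid.1 htmid.2] with u hu
      exact hconst1 u ⟨hu.1.le, hu.2.le⟩
    have heq0 := hd.unique hzero
    by_contra hne
    have hne' : P (T/2) ≠ QQ m T (T/2) := by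
      intro h
      apply hne
      simp only [hgdef, h, sub_self]
      ring
    have hpos : 0 < (P (T/2) - QQ m T (T/2)) * (Real.sinh (P (T/2)) - Real.sinh (QQ m T (T/2))) := by
      rcases lt_or_gt_of_ne hne' with h | h
      · have := Real.sinh_lt_sinh.2 h
        nlinarith
      · have := Real.sinh_lt_sinh.2 h
        nlinarith
    nlinarith
  have hg0 : g 0 = 0 := by
    rw [← hconst1 (T/2) ⟨by linarith, by linarith⟩]
    exact hmid
  have hgy : g y = 0 := by
    rcases le_total y T with h | h
    · rw [hconst1 y ⟨hy.1, h⟩, hg0]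
    · rw [hconst2 y ⟨h, hy.2⟩, hg0]
  have := pow_eq_zero_iff (n := 2) (by norm_num) |>.1 hgy
  linarith [this, sub_eq_zero.1 this]

lemma QQ_le (hm : 0 < m) (hT : 0 < T) {y : ℝ} (hy : y ∈ Icc 0 (2*T)) :
    ff m T 0 ≤ QQ m T y ∧ QQ m T y ≤ ff m T T := by
  have h0T : (0:ℝ) ∈ Icc (0:ℝ) T := ⟨le_refl _, hT.le⟩
  have hTT : T ∈ Icc (0:ℝ) T := ⟨hT.le, le_refl _⟩
  rcases le_total y T with h | h
  · rw [QQ_up0 hm hT ⟨hy.1, h⟩]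
    exact ⟨ff_mono hm hT h0T ⟨hy.1, h⟩ hy.1, ff_mono hm hT ⟨hy.1, h⟩ hTT h⟩
  · rw [QQ_down0 hm hT ⟨h, hy.2⟩]
    have hyT : y - T ∈ Icc (0:ℝ) T := ⟨by linarith, by linarith [hy.2]⟩
    have h1 : ff m T 0 ≤ ff m T (y - T) := ff_mono hm hT h0T hyT (by linarith)
    have h2 : ff m T (y - T) ≤ ff m T T := ff_mono hm hT hyT hTT (by linarith [hy.2])
    have h3 := ff_zero_eq hm hT
    constructor <;> linarith

end SW

theorem statement2 (m T : ℝ) (hm : 0 < m) (hT : 0 < T)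
    (P : ℝ → ℝ) (hP : IsSolF m T P) (hPper : Function.Periodic P (2 * T))
    (A B : ℝ) (hA : A = Real.sqrt (1 + m ^ 2)) (hB : B = Real.tanh (T * A)) :
    Real.tanh (sSup (Set.range P) / 2) = (A - Real.sqrt (A ^ 2 - B ^ 2)) / B ∧
    sSup (Set.range P) = 2 * _root_.artanh ((A - Real.sqrt (A ^ 2 - B ^ 2)) / B) ∧
    sInf (Set.range P) = -sSup (Set.range P) := by
  subst hA hB
  have hbd : ∀ x : ℝ, SW.ff m T 0 ≤ P x ∧ P x ≤ SW.ff m T T := by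
    intro x
    obtain ⟨y, hy, hxy⟩ := hPper.exists_mem_Ico₀ (by linarith) x
    rw [hxy, SW.P_eq_QQ hm hT hP hPper ⟨hy.1, hy.2.le⟩]
    exact SW.QQ_le hm hT ⟨hy.1, hy.2.le⟩
  have hPT : P T = SW.ff m T T := by
    rw [SW.P_eq_QQ hm hT hP hPper ⟨hT.le, by linarith⟩,
      SW.QQ_up0 hm hT ⟨hT.le, le_refl _⟩]
  have hP0 : P 0 = SW.ff m T 0 := by
    rw [SW.P_eq_QQ hm hT hP hPper ⟨le_refl _, by linarith⟩,
      SW.QQ_up0 hm hT ⟨le_refl _, hT.le⟩]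
  have hgr : IsGreatest (Set.range P) (SW.ff m T T) := by
    constructor
    · exact ⟨T, hPT⟩
    · rintro z ⟨x, rfl⟩
      exact (hbd x).2
  have hls : IsLeast (Set.range P) (SW.ff m T 0) := by
    constructor
    · exact ⟨0, hP0⟩
    · rintro z ⟨x, rfl⟩
      exact (hbd x).1
  have hsup : sSup (Set.range P) = SW.ff m T T := hgr.csSup_eq
  have hinf : sInf (Set.range P) = SW.ff m T 0 := hls.csInf_eq
  have hw1a : 0 < SW.ww1 m T := SW.ww1_pos hm hT
  have hw1b : SW.ww1 m T < 1 := SW.ww1_lt_one hm hT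
  have hffT : SW.ff m T T = 2 * _root_.artanh (SW.ww1 m T) := SW.ff_T_eq hm hT
  refine ⟨?_, ?_, ?_⟩
  · show Real.tanh (sSup (Set.range P) / 2) = SW.ww1 m T
    rw [hsup, hffT, show 2 * _root_.artanh (SW.ww1 m T) / 2 = _root_.artanh (SW.ww1 m T) by ring]
    exact SW.tanh_artanh (by linarith) hw1b
  · show sSup (Set.range P) = 2 * _root_.artanh (SW.ww1 m T)
    rw [hsup, hffT]
  · rw [hinf, hsup]
    exact SW.ff_zero_eq hm hT
end
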